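/- arXiv:2307.00423 — 8 statements merged into one kernel-verified Lean document; each statement's English description precedes it below -/
import Mathlib

section
/- Let m ≥ 1 and n ≥ 2 be integers. In the polynomial ring ℚ[t_1,…,t_{n−1}], the sequence of n−1 elements (t_2^m − t_1^m, t_3^m − t_2^m, …, t_{n−1}^m − t_{n−2}^m, −t_1^m t_2^m ⋯ t_{n−2}^m t_{n−1}^{2m}) is a regular sequence. -/
open Polynomial MvPolynomial

/-- `a` is a non-zero-divisor modulo `I`. -/
private def RegMod {R : Type*} [CommRing R] (I : Ideal R) (a : R) : Prop :=
  ∀ x, a * x ∈ I → x ∈ I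

private lemma RegMod.congr {R : Type*} [CommRing R] {I : Ideal R} {a a' : R}
    (hd : a - a' ∈ I) (h : RegMod I a') : RegMod I a := by
  intro x hx
  have : a' * x ∈ I := by
    have : a * x - (a - a') * x ∈ I := I.sub_mem hx (I.mul_mem_right x hd)
    rwa [sub_mul, sub_sub_cancel] at this
  exact h x this

private lemma RegMod.mul {R : Type*} [CommRing R] {I : Ideal R} {a b : R}
    (ha : RegMod I a) (hb : RegMod I b) : RegMod I (a * b) := by
  intro x hx
  rw [mul_assoc] at hx
  exact hb x (ha _ hx)

private lemma RegMod.pow {R : Type*} [CommRing R] {I : Ideal R} {a : R}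
    (ha : RegMod I a) (k : ℕ) : RegMod I (a ^ k) := by
  induction k with
  | zero => intro x hx; rwa [pow_zero, one_mul] at hx
  | succ k ih => rw [pow_succ]; exact ih.mul ha

private lemma RegMod.neg {R : Type*} [CommRing R] {I : Ideal R} {a : R}
    (ha : RegMod I a) : RegMod I (-a) := by
  intro x hx
  rw [neg_mul] at hx
  exact ha x (by simpa using I.neg_mem hx)

/-- transfer RegMod along a ring isomorphism -/
private lemma RegMod.of_equiv {R S : Type*} [CommRing R] [CommRing S] (e : R ≃+* S)
    {J : Ideal S} {b : S} (hb : RegMod J b) (I : Ideal R) (a : R)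
    (hI : Ideal.map (e : R →+* S) I = J) (ha : e a = b) : RegMod I a := by
  intro x hx
  have h1 : e (a * x) ∈ J := by
    rw [← hI]; exact Ideal.mem_map_of_mem _ hx
  rw [map_mul, ha] at h1
  have h2 : e x ∈ J := hb _ h1
  rw [← hI, Ideal.map_comap_of_equiv e] at h2
  simpa using h2

/-- A polynomial that is monic modulo `I` is a non-zero-divisor modulo `I.map C`. -/
private lemma regMod_monic {T : Type*} [CommRing T] (I : Ideal T) (f : Polynomial T)
    (hf : (f.map (Ideal.Quotient.mk I)).Monic) :
    RegMod (Ideal.map Polynomial.C I) f := by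
  intro g hg
  have hker : Ideal.map Polynomial.C I
      = RingHom.ker (Polynomial.mapRingHom (Ideal.Quotient.mk I)) := by
    rw [Polynomial.ker_mapRingHom, Ideal.mk_ker]
  rw [hker, RingHom.mem_ker] at hg ⊢
  rw [map_mul] at hg
  have : (Polynomial.mapRingHom (Ideal.Quotient.mk I)) f
      = f.map (Ideal.Quotient.mk I) := rfl
  rw [this] at hg
  exact (Polynomial.Monic.mul_right_eq_zero_iff hf).mp hg

private lemma regMod_adjoinRoot {T : Type*} [CommRing T] (I : Ideal T) (b : T)
    (hb : RegMod I b) (q : Polynomial T)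
    (hq : (q.map (Ideal.Quotient.mk I)).Monic) :
    RegMod (Ideal.map Polynomial.C I ⊔ Ideal.span {q}) (Polynomial.C b) := by
  set k := Ideal.Quotient.mk I with hk
  set q' := q.map k with hq'
  set φ : Polynomial T →+* AdjoinRoot q' := (AdjoinRoot.mk q').comp (Polynomial.mapRingHom k) with hφ
  have hkermk : RingHom.ker (AdjoinRoot.mk q') = Ideal.span {q'} := by
    ext x
    rw [RingHom.mem_ker, AdjoinRoot.mk_eq_zero, Ideal.mem_span_singleton]
  have hker : RingHom.ker φ = Ideal.map Polynomial.C I ⊔ Ideal.span {q} := by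
    rw [hφ, ← RingHom.comap_ker, hkermk]
    have h1 : Ideal.span {q'} = Ideal.map (Polynomial.mapRingHom k) (Ideal.span {q}) := by
      rw [Ideal.map_span, Set.image_singleton]; rfl
    rw [h1, Ideal.comap_map_of_surjective _ (Polynomial.map_surjective k Ideal.Quotient.mk_surjective)]
    have h2 : Ideal.comap (Polynomial.mapRingHom k) ⊥ = Ideal.map Polynomial.C I := by
      rw [← RingHom.ker_eq_comap_bot, Polynomial.ker_mapRingHom, hk, Ideal.mk_ker]
    rw [h2, sup_comm]
  have hreg : ∀ u v : T ⧸ I, k b * u = k b * v → u = v := by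
    intro u v huv
    obtain ⟨x, rfl⟩ := Ideal.Quotient.mk_surjective u
    obtain ⟨y, rfl⟩ := Ideal.Quotient.mk_surjective v
    rw [← map_mul, ← map_mul] at huv
    rw [Ideal.Quotient.eq] at huv ⊢
    rw [← mul_sub] at huv
    exact hb _ huv
  have hregA : ∀ z w : AdjoinRoot q',
      AdjoinRoot.of q' (k b) * z = AdjoinRoot.of q' (k b) * w → z = w := by
    intro z w hzw
    have pb := AdjoinRoot.powerBasis' hq
    have h1 : k b • z = k b • w := by
      rwa [Algebra.smul_def, Algebra.smul_def, AdjoinRoot.algebraMap_eq]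
    have h2 := congrArg pb.basis.repr h1
    rw [map_smul, map_smul] at h2
    apply pb.basis.repr.injective
    ext i
    have := congrArg (fun f => f i) h2
    simp only [Finsupp.smul_apply, smul_eq_mul] at this
    exact hreg _ _ this
  intro g hg
  rw [← hker, RingHom.mem_ker] at hg ⊢
  rw [map_mul] at hg
  have hCb : φ (Polynomial.C b) = AdjoinRoot.of q' (k b) := by
    rw [hφ]
    show (AdjoinRoot.mk q') (Polynomial.mapRingHom k (Polynomial.C b)) = _
    rw [Polynomial.coe_mapRingHom, Polynomial.map_C]
    rfl
  rw [hCb] at hg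
  exact hregA (φ g) 0 (by rw [hg, mul_zero])

section Peel

variable {σ : Type} [DecidableEq σ]

/-- The isomorphism peeling off the variable `y`. -/
private noncomputable def peel (y : σ) :
    MvPolynomial σ ℚ ≃+* Polynomial (MvPolynomial {j : σ // j ≠ y} ℚ) :=
  ((MvPolynomial.renameEquiv ℚ (Equiv.optionSubtypeNe y).symm).trans
    (MvPolynomial.optionEquivLeft ℚ _)).toRingEquiv

private lemma peel_X_self (y : σ) : peel y (X y) = Polynomial.X := by
  simp [peel, Equiv.optionSubtypeNe_symm_self, optionEquivLeft_X_none]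

private lemma peel_X_ne (y : σ) {j : σ} (hj : j ≠ y) :
    peel y (X j) = Polynomial.C (X ⟨j, hj⟩) := by
  simp [peel, Equiv.optionSubtypeNe_symm_of_ne hj, optionEquivLeft_X_some]

private lemma peel_rename (y : σ) (p : MvPolynomial {j : σ // j ≠ y} ℚ) :
    peel y (rename Subtype.val p) = Polynomial.C p := by
  induction p using MvPolynomial.induction_on with
  | C a =>
    rw [rename_C]
    simp [peel, optionEquivLeft_C]
  | add p q hp hq => rw [map_add, map_add, hp, hq, map_add]
  | mul_X p j hp =>
    rw [map_mul, map_mul, hp, rename_X, peel_X_ne y j.2, ← map_mul]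

end Peel

private lemma regMod_monic_span {σ : Type} [DecidableEq σ] (y : σ)
    (G : Set (MvPolynomial σ ℚ))
    (hG : ∀ p ∈ G, ∃ q, rename (Subtype.val : {j : σ // j ≠ y} → σ) q = p)
    (f : MvPolynomial σ ℚ) (hf : (peel y f).Monic) :
    RegMod (Ideal.span G) f := by
  set ι : MvPolynomial {j : σ // j ≠ y} ℚ →ₐ[ℚ] MvPolynomial σ ℚ
    := rename (Subtype.val : {j : σ // j ≠ y} → σ) with hι
  set S : Set (MvPolynomial {j : σ // j ≠ y} ℚ) := ι ⁻¹' G with hS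
  have hGS : G = ι '' S := by
    ext p; constructor
    · intro hp; obtain ⟨q, rfl⟩ := hG p hp; exact ⟨q, hp, rfl⟩
    · rintro ⟨q, hq, rfl⟩; exact hq
  have hb : RegMod (Ideal.map (Polynomial.C : MvPolynomial {j : σ // j ≠ y} ℚ →+*
      Polynomial (MvPolynomial {j : σ // j ≠ y} ℚ)) (Ideal.span S)) (peel y f) :=
    regMod_monic (Ideal.span S) (peel y f) (hf.map (Ideal.Quotient.mk (Ideal.span S)))
  refine RegMod.of_equiv (peel y) hb _ f ?_ rfl
  rw [hGS, Ideal.map_span, Ideal.map_span, Set.image_image]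
  congr 1
  refine Set.image_congr fun q _ => ?_
  exact peel_rename y q

private lemma crux (m : ℕ) (hm : m ≠ 0) :
    ∀ (N : ℕ) (σ : Type) [DecidableEq σ] (x0 : σ) (s : Finset σ), s.card = N → x0 ∉ s →
      RegMod (Ideal.span ((fun j => (X j : MvPolynomial σ ℚ) ^ m - X x0 ^ m) '' ↑s)) (X x0) := by
  intro N
  induction N with
  | zero =>
    intro σ _ x0 s hcard hx0
    rw [Finset.card_eq_zero] at hcard; subst hcard
    simp only [Finset.coe_empty, Set.image_empty, Ideal.span_empty]
    intro g hg
    rw [Ideal.mem_bot] at hg ⊢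
    exact (mul_eq_zero.mp hg).resolve_left (MvPolynomial.X_ne_zero x0)
  | succ N ih =>
    intro σ _ x0 s hcard hx0
    have hs : s.Nonempty := by rw [← Finset.card_pos, hcard]; omega
    obtain ⟨y, hy⟩ := hs
    have hyx0 : y ≠ x0 := fun h => hx0 (h ▸ hy)
    have hx0y : x0 ≠ y := Ne.symm hyx0
    set t : Finset {j : σ // j ≠ y} := (s.erase y).subtype _ with ht
    have htcard : t.card = N := by
      rw [ht, Finset.card_subtype, Finset.filter_true_of_mem (fun j hj => (Finset.mem_erase.mp hj).1)]
      rw [Finset.card_erase_of_mem hy, hcard]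
      omega
    have hx0t : (⟨x0, hx0y⟩ : {j : σ // j ≠ y}) ∉ t := by
      rw [ht]
      intro hmem
      rw [Finset.mem_subtype] at hmem
      exact hx0 (Finset.mem_of_mem_erase hmem)
    have hb0 := ih {j : σ // j ≠ y} (⟨x0, hx0y⟩ : {j : σ // j ≠ y}) t htcard hx0t
    set q : Polynomial (MvPolynomial {j : σ // j ≠ y} ℚ) :=
      Polynomial.X ^ m - Polynomial.C (X (⟨x0, hx0y⟩ : {j : σ // j ≠ y}) ^ m) with hqdef
    set S' : Set (MvPolynomial {j : σ // j ≠ y} ℚ) :=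
      (fun j => (X j : MvPolynomial {j : σ // j ≠ y} ℚ) ^ m
        - X (⟨x0, hx0y⟩ : {j : σ // j ≠ y}) ^ m) '' ↑t with hS'
    have hq : (q.map (Ideal.Quotient.mk (Ideal.span S'))).Monic := by
      rw [hqdef, Polynomial.map_sub, Polynomial.map_pow, Polynomial.map_X, Polynomial.map_C]
      exact Polynomial.monic_X_pow_sub_C _ hm
    refine RegMod.of_equiv (peel y)
      (J := Ideal.map Polynomial.C (Ideal.span S') ⊔ Ideal.span {q})
      (b := Polynomial.C (X (⟨x0, hx0y⟩ : {j : σ // j ≠ y})))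
      (regMod_adjoinRoot _ _ hb0 q hq) _ (X x0) ?_ (peel_X_ne y hx0y)
  -- ideal image computation
    have hpy : (peel y : MvPolynomial σ ℚ →+* Polynomial (MvPolynomial {j : σ // j ≠ y} ℚ))
        ((X y : MvPolynomial σ ℚ) ^ m - X x0 ^ m) = q := by
      show peel y _ = q
      rw [map_sub, map_pow, map_pow, peel_X_self, peel_X_ne y hx0y, ← Polynomial.C_pow, hqdef]
    have hpeelgen : ∀ (j : σ) (hjy : j ≠ y),
        (peel y : MvPolynomial σ ℚ →+* Polynomial (MvPolynomial {j : σ // j ≠ y} ℚ))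
          ((X j : MvPolynomial σ ℚ) ^ m - X x0 ^ m)
        = Polynomial.C ((X (⟨j, hjy⟩ : {j : σ // j ≠ y}) : MvPolynomial {j : σ // j ≠ y} ℚ) ^ m
            - X (⟨x0, hx0y⟩ : {j : σ // j ≠ y}) ^ m) := by
      intro j hjy
      show peel y _ = _
      rw [map_sub, map_pow, map_pow, peel_X_ne y hjy, peel_X_ne y hx0y,
        ← Polynomial.C_pow, ← Polynomial.C_pow, ← map_sub]
    have hins : (↑s : Set σ) = insert y ↑(s.erase y) := by
      rw [← Finset.coe_insert, Finset.insert_erase hy]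
    rw [hins, Set.image_insert_eq, Ideal.span_insert, Ideal.map_sup]
    have h1 : Ideal.map (peel y : MvPolynomial σ ℚ →+* _)
        (Ideal.span {(X y : MvPolynomial σ ℚ) ^ m - X x0 ^ m}) = Ideal.span {q} := by
      rw [Ideal.map_span, Set.image_singleton]
      rw [hpy]
    have h2 : Ideal.map (peel y : MvPolynomial σ ℚ →+* _)
        (Ideal.span ((fun j => (X j : MvPolynomial σ ℚ) ^ m - X x0 ^ m) '' ↑(s.erase y)))
        = Ideal.map Polynomial.C (Ideal.span S') := by
      rw [Ideal.map_span, Ideal.map_span, Set.image_image, hS', Set.image_image]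
      congr 1
      ext z
      constructor
      · rintro ⟨j, hj, rfl⟩
        have hjy : j ≠ y := (Finset.mem_erase.mp hj).1
        refine ⟨⟨j, hjy⟩, ?_, ?_⟩
        · rw [ht, Finset.mem_coe, Finset.mem_subtype]
          exact hj
        · exact (hpeelgen j hjy).symm
      · rintro ⟨⟨j, hjy⟩, hj, rfl⟩
        rw [ht, Finset.mem_coe, Finset.mem_subtype] at hj
        exact ⟨j, hj, hpeelgen j hjy⟩
    rw [h1, h2, sup_comm]

private lemma RegMod.isSMulRegular {R : Type*} [CommRing R] (I : Ideal R) (a : R)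
    (h : RegMod I a) :
    IsSMulRegular (R ⧸ (I • ⊤ : Submodule R R)) a := by
  have hIT : (I • ⊤ : Submodule R R) = I := by rw [smul_eq_mul, Ideal.mul_top]
  intro x y hxy
  obtain ⟨x, rfl⟩ := Submodule.Quotient.mk_surjective _ x
  obtain ⟨y, rfl⟩ := Submodule.Quotient.mk_surjective _ y
  simp only [← Submodule.Quotient.mk_smul] at hxy
  rw [Submodule.Quotient.eq, hIT] at hxy
  rw [Submodule.Quotient.eq, hIT]
  have : a * (x - y) ∈ I := by rwa [smul_eq_mul, smul_eq_mul, ← mul_sub] at hxy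
  exact h _ this

private lemma setOf_mem_take_ofFn {α : Type*} {v : ℕ} (F : Fin v → α) (i : ℕ) :
    { r | r ∈ (List.ofFn F).take i } = F '' {j : Fin v | (j : ℕ) < i} := by
  ext r
  simp only [Set.mem_setOf_eq, Set.mem_image]
  constructor
  · intro hr
    rw [List.mem_iff_getElem] at hr
    obtain ⟨k, hk, hkr⟩ := hr
    have hk' : k < min i (List.ofFn F).length := by simpa using hk
    have hki : k < i := lt_of_lt_of_le hk' (min_le_left _ _)
    have hkv : k < v := by
      have := lt_of_lt_of_le hk' (min_le_right _ _)
      simpa using this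
    refine ⟨⟨k, hkv⟩, hki, ?_⟩
    rw [← hkr, List.getElem_take, List.getElem_ofFn]
  · rintro ⟨j, hji, rfl⟩
    rw [List.mem_iff_getElem]
    refine ⟨(j : ℕ), ?_, ?_⟩
    · simp only [List.length_take, List.length_ofFn]
      exact lt_min hji j.2
    · rw [List.getElem_take, List.getElem_ofFn]

open MvPolynomial in
/-- For integers `m ≥ 1` and `n ≥ 2`, the sequence
`(t₂^m − t₁^m, t₃^m − t₂^m, …, t_{n−1}^m − t_{n−2}^m, −t₁^m ⋯ t_{n−2}^m t_{n−1}^{2m})`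
of `n − 1` elements is a regular sequence in `ℚ[t₁, …, t_{n−1}]`.
(Variables `t₁, …, t_{n−1}` are `X 0, …, X (n−2)` in `MvPolynomial (Fin (n-1)) ℚ`.) -/
theorem stmt0 (m n : ℕ) (hm : 1 ≤ m) (hn : 2 ≤ n) :
    RingTheory.Sequence.IsWeaklyRegular (MvPolynomial (Fin (n - 1)) ℚ)
      (List.ofFn fun i : Fin (n - 1) =>
        if h : (i : ℕ) + 1 < n - 1 then
          X (⟨(i : ℕ) + 1, h⟩ : Fin (n - 1)) ^ m - X i ^ m
        else
          -((∏ j ∈ Finset.univ.filter (fun j : Fin (n - 1) => (j : ℕ) + 1 < n - 1),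
                (X j : MvPolynomial (Fin (n - 1)) ℚ) ^ m)
              * X i ^ (2 * m))) := by
  set v := n - 1 with hv
  have hv1 : 1 ≤ v := by omega
  have hm0 : m ≠ 0 := by omega
  set F : Fin v → MvPolynomial (Fin v) ℚ := fun i : Fin v =>
    if h : (i : ℕ) + 1 < v then
      X (⟨(i : ℕ) + 1, h⟩ : Fin v) ^ m - X i ^ m
    else
      -((∏ j ∈ Finset.univ.filter (fun j : Fin v => (j : ℕ) + 1 < v),
            (X j : MvPolynomial (Fin v) ℚ) ^ m)
          * X i ^ (2 * m)) with hF
  constructor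
  intro i hi
  have hiv : i < v := by simpa using hi
  have hgetel : (List.ofFn F)[i]'hi = F ⟨i, hiv⟩ := by
    rw [List.getElem_ofFn]
  rw [hgetel]
  have hideal : Ideal.ofList ((List.ofFn F).take i)
      = Ideal.span (F '' {j : Fin v | (j : ℕ) < i}) := by
    unfold Ideal.ofList
    rw [setOf_mem_take_ofFn]
  rw [hideal]
  apply RegMod.isSMulRegular
  by_cases h : i + 1 < v
  · -- monic case
    have hFi : F ⟨i, hiv⟩ = X (⟨i + 1, h⟩ : Fin v) ^ m - X (⟨i, hiv⟩ : Fin v) ^ m := by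
      rw [hF]; exact dif_pos h
    rw [hFi]
    apply regMod_monic_span (⟨i + 1, h⟩ : Fin v)
    · rintro p ⟨j, hj, rfl⟩
      simp only [Set.mem_setOf_eq] at hj
      have hj1 : (j : ℕ) + 1 < v := by omega
      have hne1 : (⟨(j : ℕ) + 1, hj1⟩ : Fin v) ≠ (⟨i + 1, h⟩ : Fin v) := by
        intro hc; apply absurd (congrArg Fin.val hc); simp; omega
      have hne2 : j ≠ (⟨i + 1, h⟩ : Fin v) := by
        intro hc; apply absurd (congrArg Fin.val hc); simp; omega
      refine ⟨X (⟨(⟨(j : ℕ) + 1, hj1⟩ : Fin v), hne1⟩ :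
          {t : Fin v // t ≠ (⟨i + 1, h⟩ : Fin v)}) ^ m - X (⟨j, hne2⟩ :
          {t : Fin v // t ≠ (⟨i + 1, h⟩ : Fin v)}) ^ m, ?_⟩
      rw [map_sub, map_pow, map_pow, rename_X, rename_X, hF]
      rw [eq_comm]
      exact dif_pos hj1
    · have hne : (⟨i, hiv⟩ : Fin v) ≠ (⟨i + 1, h⟩ : Fin v) := by
        intro hc; apply absurd (congrArg Fin.val hc); simp
      rw [map_sub, map_pow, map_pow, peel_X_self, peel_X_ne _ hne, ← Polynomial.C_pow]
      exact Polynomial.monic_X_pow_sub_C _ hm0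
  · -- last element case
    have hieq : i = v - 1 := by omega
    set x0 : Fin v := ⟨i, hiv⟩ with hx0
    set s : Finset (Fin v) := Finset.univ.filter (fun j : Fin v => (j : ℕ) + 1 < v) with hs
    have hmem_s : ∀ j : Fin v, j ∈ s ↔ (j : ℕ) + 1 < v := by
      intro j; rw [hs, Finset.mem_filter]; simp
    have hx0v : (x0 : ℕ) = i := rfl
    have hx0s : x0 ∉ s := by rw [hmem_s]; omega
    have hserase : s = Finset.univ.erase x0 := by
      ext j
      rw [hmem_s, Finset.mem_erase]
      constructor
      · intro hj
        refine ⟨?_, Finset.mem_univ j⟩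
        intro hc
        rw [hc] at hj
        omega
      · rintro ⟨hj, -⟩
        have : (j : ℕ) ≠ i := fun hc => hj (Fin.ext hc)
        have := j.2
        omega
    have hscard : s.card = v - 1 := by
      rw [hserase, Finset.card_erase_of_mem (Finset.mem_univ x0), Finset.card_univ,
        Fintype.card_fin]
    have hcrux := crux m hm0 (v - 1) (Fin v) x0 s hscard hx0s
    set J := Ideal.span ((fun j => (X j : MvPolynomial (Fin v) ℚ) ^ m - X x0 ^ m) '' ↑s)
      with hJ
    have hgJ : ∀ t : Fin v, (X t : MvPolynomial (Fin v) ℚ) ^ m - X x0 ^ m ∈ J := by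
      intro t
      by_cases ht : t = x0
      · rw [ht, sub_self]; exact J.zero_mem
      · apply Ideal.subset_span
        refine ⟨t, ?_, rfl⟩
        rw [Finset.mem_coe, hmem_s]
        have : (t : ℕ) ≠ i := fun hc => ht (Fin.ext hc)
        have := t.2
        omega
    -- the two ideals agree
    have hidJ : Ideal.span (F '' {j : Fin v | (j : ℕ) < i}) = J := by
      apply le_antisymm
      · rw [Ideal.span_le]
        rintro p ⟨j, hj, rfl⟩
        simp only [Set.mem_setOf_eq] at hj
        have hj1 : (j : ℕ) + 1 < v := by omega
        have hFj : F j = X (⟨(j : ℕ) + 1, hj1⟩ : Fin v) ^ m - X j ^ m := by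
          rw [hF]
          simp only []
          rw [dif_pos hj1]
        rw [hFj, SetLike.mem_coe,
          ← sub_sub_sub_cancel_right ((X (⟨(j : ℕ) + 1, hj1⟩ : Fin v) : MvPolynomial (Fin v) ℚ) ^ m) (X j ^ m) (X x0 ^ m)]
        exact J.sub_mem (hgJ _) (hgJ _)
      · rw [Ideal.span_le]
        rintro p ⟨j, hj, rfl⟩
        rw [Finset.mem_coe, hmem_s] at hj
        have haux : ∀ (d a : ℕ) (ha : a < v), a + d = i →
            (X (⟨a, ha⟩ : Fin v) : MvPolynomial (Fin v) ℚ) ^ m - X x0 ^ m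
              ∈ Ideal.span (F '' {j : Fin v | (j : ℕ) < i}) := by
          intro d
          induction d with
          | zero =>
            intro a ha hai
            have : (⟨a, ha⟩ : Fin v) = x0 := Fin.ext (show a = i by omega)
            rw [this, sub_self]
            exact Ideal.zero_mem _
          | succ d ih =>
            intro a ha hai
            have ha1 : a + 1 < v := by omega
            have h1 := ih (a + 1) ha1 (by omega)
            have h2 : F ⟨a, ha⟩ ∈ Ideal.span (F '' {j : Fin v | (j : ℕ) < i}) := by
              apply Ideal.subset_span
              exact ⟨⟨a, ha⟩, by show a < i; omega, rfl⟩
            have hFa : F ⟨a, ha⟩ = X (⟨a + 1, ha1⟩ : Fin v) ^ m - X (⟨a, ha⟩ : Fin v) ^ m := by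
              rw [hF]
              simp only []
              rw [dif_pos ha1]
            rw [hFa] at h2
            have := Ideal.sub_mem _ h1 h2
            rwa [sub_sub_sub_cancel_left] at this
        have := haux (i - (j : ℕ)) (j : ℕ) j.2 (by omega)
        simpa using this
    rw [hidJ]
    -- now handle the element
    have hFx0 : F x0 = -((∏ j ∈ s, (X j : MvPolynomial (Fin v) ℚ) ^ m) * X x0 ^ (2 * m)) := by
      rw [hF]
      simp only []
      rw [dif_neg (by omega : ¬ ((x0 : ℕ) + 1 < v))]
    rw [hFx0]
    have hcongr : -((∏ j ∈ s, (X j : MvPolynomial (Fin v) ℚ) ^ m) * X x0 ^ (2 * m))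
        - (-(((X x0 : MvPolynomial (Fin v) ℚ) ^ m) ^ s.card * X x0 ^ (2 * m))) ∈ J := by
      have hprod : ∏ j ∈ s, (Ideal.Quotient.mk J) (X j ^ m)
          = (Ideal.Quotient.mk J) ((X x0 : MvPolynomial (Fin v) ℚ) ^ m) ^ s.card := by
        rw [Finset.prod_congr rfl (fun j _ => (Ideal.Quotient.eq.mpr (hgJ j) :
          (Ideal.Quotient.mk J) (X j ^ m) = (Ideal.Quotient.mk J) (X x0 ^ m))),
          Finset.prod_const]
      rw [← Ideal.Quotient.eq, map_neg, map_neg, map_mul, map_mul, map_prod, hprod]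
      simp only [map_pow]
    exact RegMod.congr hcongr (((hcrux.pow m).pow s.card).mul (hcrux.pow (2 * m))).neg
end

section
/- Let m ≥ 1 and n ≥ 2 be integers. In the polynomial ring ℚ[t_1,…,t_{n−1}], the sequence of n−1 elements (t_2^m − t_1^m, t_3^m − t_1^m, …, t_{n−1}^m − t_1^m, −t_1^m t_2^m ⋯ t_{n−2}^m t_{n−1}^{2m}) is a regular sequence. -/
open MvPolynomial

namespace Stmt1Aux

variable {σ : Type*} [Fintype σ] [DecidableEq σ]

noncomputable def nf (m : ℕ) (x0 : σ) (S : Finset σ) (d : σ →₀ ℕ) : σ →₀ ℕ :=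
  Finsupp.equivFunOnFinite.symm fun j =>
    if j = x0 then d x0 + m * ∑ i ∈ S, d i / m
    else if j ∈ S then d j % m else d j

@[simp] lemma nf_apply (m : ℕ) (x0 : σ) (S : Finset σ) (d : σ →₀ ℕ) (j : σ) :
    nf m x0 S d j =
      if j = x0 then d x0 + m * ∑ i ∈ S, d i / m
      else if j ∈ S then d j % m else d j := rfl

noncomputable def Phi (m : ℕ) (x0 : σ) (S : Finset σ) :
    MvPolynomial σ ℚ →ₗ[ℚ] MvPolynomial σ ℚ :=
  (Finsupp.lsum ℚ fun d => (monomial (nf m x0 S d) : ℚ →ₗ[ℚ] MvPolynomial σ ℚ)) ∘ₗ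
    (AddMonoidAlgebra.coeffLinearEquiv ℚ).toLinearMap

lemma Phi_monomial (m : ℕ) (x0 : σ) (S : Finset σ) (d : σ →₀ ℕ) (c : ℚ) :
    Phi m x0 S (monomial d c) = monomial (nf m x0 S d) c := by
  rw [← single_eq_monomial d c]
  show (Finsupp.lsum ℚ fun d => (monomial (nf m x0 S d) : ℚ →ₗ[ℚ] MvPolynomial σ ℚ))
    (Finsupp.single d c) = _
  exact Finsupp.lsum_single _ _ _ _

variable {m : ℕ} {x0 : σ} {S : Finset σ}

lemma nf_add_right (hx0 : x0 ∉ S) (d e : σ →₀ ℕ) (he : ∀ j ∈ S, e j = 0) :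
    nf m x0 S (e + d) = e + nf m x0 S d := by
  ext j
  have hsum : ∑ i ∈ S, (e + d) i / m = ∑ i ∈ S, d i / m := by
    refine Finset.sum_congr rfl fun i hi => ?_
    rw [Finsupp.add_apply, he i hi, Nat.zero_add]
  rw [Finsupp.add_apply]
  by_cases h1 : j = x0
  · simp only [nf_apply, if_pos h1]
    subst h1
    rw [hsum, Finsupp.add_apply]
    ring
  · by_cases h2 : j ∈ S
    · simp only [nf_apply, if_neg h1, if_pos h2, Finsupp.add_apply, he j h2, Nat.zero_add]
    · simp only [nf_apply, if_neg h1, if_neg h2, Finsupp.add_apply]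

lemma nf_self (hx0 : x0 ∉ S) (e : σ →₀ ℕ) (he : ∀ j ∈ S, e j = 0) :
    nf m x0 S e = e := by
  ext j
  have hsum : ∑ i ∈ S, e i / m = 0 :=
    Finset.sum_eq_zero fun i hi => by rw [he i hi]; exact Nat.zero_div m
  simp only [nf_apply, hsum, Nat.mul_zero, Nat.add_zero]
  split_ifs with h1 h2
  · subst h1; rfl
  · rw [he j h2]; rfl
  · rfl

lemma Phi_monomial_mul (hx0 : x0 ∉ S) (e : σ →₀ ℕ) (he : ∀ j ∈ S, e j = 0) (c : ℚ)
    (f : MvPolynomial σ ℚ) :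
    Phi m x0 S (monomial e c * f) = monomial e c * Phi m x0 S f := by
  induction f using MvPolynomial.induction_on' with
  | monomial d c' =>
      rw [monomial_mul, Phi_monomial, Phi_monomial, monomial_mul,
        nf_add_right hx0 d e he]
  | add p q hp hq =>
      rw [mul_add, map_add, map_add, hp, hq, mul_add]

lemma Phi_mul (hx0 : x0 ∉ S) (g : MvPolynomial σ ℚ)
    (hg : ∀ d ∈ g.support, ∀ j ∈ S, d j = 0) (f : MvPolynomial σ ℚ) :
    Phi m x0 S (g * f) = g * Phi m x0 S f := by
  conv_lhs => rw [g.as_sum]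
  conv_rhs => rw [g.as_sum]
  rw [Finset.sum_mul, map_sum, Finset.sum_mul]
  exact Finset.sum_congr rfl fun d hd => Phi_monomial_mul hx0 d (hg d hd) _ f

lemma nf_single_add (hm : 1 ≤ m) (hx0 : x0 ∉ S) {j : σ} (hj : j ∈ S) (d : σ →₀ ℕ) :
    nf m x0 S (Finsupp.single j m + d) = nf m x0 S (Finsupp.single x0 m + d) := by
  have hjx : j ≠ x0 := fun h => hx0 (h ▸ hj)
  have h1 : ∑ i ∈ S, (Finsupp.single j m + d) i / m
      = (∑ i ∈ S, d i / m) + 1 := by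
    have key : ∀ i ∈ S, (Finsupp.single j m + d) i / m
        = d i / m + (if j = i then 1 else 0) := by
      intro i hi
      rw [Finsupp.add_apply, Finsupp.single_apply]
      by_cases h : j = i
      · rw [if_pos h, if_pos h, Nat.add_comm m (d i), Nat.add_div_right (d i) hm]
      · rw [if_neg h, if_neg h, Nat.zero_add, Nat.add_zero]
    rw [Finset.sum_congr rfl key, Finset.sum_add_distrib,
      Finset.sum_ite_eq S j (fun _ => 1), if_pos hj]
  have h2 : ∑ i ∈ S, (Finsupp.single x0 m + d) i / m = ∑ i ∈ S, d i / m := by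
    refine Finset.sum_congr rfl fun i hi => ?_
    rw [Finsupp.add_apply, Finsupp.single_apply,
      if_neg (fun h : x0 = i => hx0 (h ▸ hi)), Nat.zero_add]
  ext i
  by_cases hix : i = x0
  · subst hix
    simp only [nf_apply, if_pos rfl]
    rw [h1, h2, Finsupp.add_apply, Finsupp.add_apply, Finsupp.single_apply,
      Finsupp.single_apply, if_neg hjx, if_pos rfl]
    split_ifs with hh
    · ring
    · exact absurd trivial hh
  · by_cases hiS : i ∈ S
    · simp only [nf_apply, if_neg hix, if_pos hiS]
      rw [Finsupp.add_apply, Finsupp.add_apply, Finsupp.single_apply,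
        Finsupp.single_apply, if_neg (fun h : x0 = i => hix h.symm)]
      by_cases hji : j = i
      · rw [if_pos hji, Nat.zero_add, Nat.add_mod_left]
      · rw [if_neg hji]
    · have hji : j ≠ i := fun h => hiS (h ▸ hj)
      simp only [nf_apply, if_neg hix, if_neg hiS]
      rw [Finsupp.add_apply, Finsupp.add_apply, Finsupp.single_apply,
        Finsupp.single_apply, if_neg hji, if_neg (fun h : x0 = i => hix h.symm)]

/-- The ideal generated by `x_j^m - x_0^m`, `j ∈ S`. -/
noncomputable def genIdeal (m : ℕ) (x0 : σ) (S : Finset σ) : Ideal (MvPolynomial σ ℚ) :=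
  Ideal.span ((fun j => (X j : MvPolynomial σ ℚ) ^ m - X x0 ^ m) '' ↑S)

lemma Phi_gen_mul (hm : 1 ≤ m) (hx0 : x0 ∉ S) {j : σ} (hj : j ∈ S)
    (f : MvPolynomial σ ℚ) :
    Phi m x0 S (((X j : MvPolynomial σ ℚ) ^ m - X x0 ^ m) * f) = 0 := by
  induction f using MvPolynomial.induction_on' with
  | monomial d c =>
      rw [sub_mul, X_pow_eq_monomial, X_pow_eq_monomial, monomial_mul, monomial_mul,
        one_mul, map_sub, Phi_monomial, Phi_monomial, nf_single_add hm hx0 hj d,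
        sub_self]
  | add p q hp hq =>
      rw [mul_add, map_add, hp, hq, add_zero]

lemma Phi_eq_zero_of_mem (hm : 1 ≤ m) (hx0 : x0 ∉ S) {f : MvPolynomial σ ℚ}
    (hf : f ∈ genIdeal m x0 S) : Phi m x0 S f = 0 := by
  have key : ∀ g ∈ genIdeal m x0 S, ∀ h : MvPolynomial σ ℚ,
      Phi m x0 S (h * g) = 0 := by
    intro g hg
    refine Submodule.span_induction ?_ ?_ ?_ ?_ hg
    · rintro x ⟨j, hj, rfl⟩ h
      rw [mul_comm]
      exact Phi_gen_mul hm hx0 hj h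
    · intro h; rw [mul_zero, map_zero]
    · intro x y _ _ hx hy h
      rw [mul_add, map_add, hx, hy, add_zero]
    · intro r x _ hx h
      rw [smul_eq_mul, mul_comm r x, ← mul_assoc, mul_comm h x, mul_assoc,
        mul_comm x (h * r)]
      exact hx (h * r)
  have := key f hf 1
  rwa [one_mul] at this

lemma monomial_sub_nf_mem (hm : 1 ≤ m) (hx0 : x0 ∉ S) (d : σ →₀ ℕ) (c : ℚ) :
    monomial d c - monomial (nf m x0 S d) c ∈ genIdeal m x0 S := by
  generalize hn : ∑ i ∈ S, d i = n
  induction n using Nat.strong_induction_on generalizing d with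
  | _ n ih =>
    by_cases hcase : ∃ j ∈ S, m ≤ d j
    · obtain ⟨j, hj, hjm⟩ := hcase
      set d'' : σ →₀ ℕ := d - Finsupp.single j m with hd''
      have hd : d = Finsupp.single j m + d'' := by
        ext i
        rw [Finsupp.add_apply, hd'', Finsupp.tsub_apply, Finsupp.single_apply]
        by_cases h : j = i
        · subst h; rw [if_pos rfl]; omega
        · rw [if_neg h]; omega
      have hnf : nf m x0 S d = nf m x0 S (Finsupp.single x0 m + d'') := by
        rw [hd, nf_single_add hm hx0 hj d'']
      have hmn : m ≤ n := by
        rw [← hn]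
        calc m ≤ d j := hjm
        _ ≤ ∑ i ∈ S, d i := Finset.single_le_sum (fun i _ => Nat.zero_le _) hj
      have hsum : ∑ i ∈ S, (Finsupp.single x0 m + d'') i = n - m := by
        have e1 : ∀ i ∈ S, (Finsupp.single x0 m + d'') i = d'' i := by
          intro i hi
          rw [Finsupp.add_apply, Finsupp.single_apply,
            if_neg (fun h : x0 = i => hx0 (h ▸ hi)), Nat.zero_add]
        refine (Finset.sum_congr rfl e1).trans ?_
        show (∑ i ∈ S, d'' i) = n - m
        have e2 : ∑ i ∈ S, d i = (∑ i ∈ S, d'' i) + m := by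
          have e3 : ∀ i ∈ S, d i = d'' i + (if j = i then m else 0) := by
            intro i hi
            rw [hd'', Finsupp.tsub_apply, Finsupp.single_apply]
            by_cases h : j = i
            · subst h; rw [if_pos rfl]; omega
            · rw [if_neg h]; omega
          rw [Finset.sum_congr rfl e3, Finset.sum_add_distrib,
            Finset.sum_ite_eq S j (fun _ => m), if_pos hj]
        omega
      have step1 : monomial d c - monomial (Finsupp.single x0 m + d'') c
          ∈ genIdeal m x0 S := by
        have : monomial d c - monomial (Finsupp.single x0 m + d'') c
            = ((X j : MvPolynomial σ ℚ) ^ m - X x0 ^ m) * monomial d'' c := by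
          rw [sub_mul, X_pow_eq_monomial, X_pow_eq_monomial, monomial_mul,
            monomial_mul, one_mul, hd]
        rw [this]
        exact Ideal.mul_mem_right _ _
          (Ideal.subset_span ⟨j, hj, rfl⟩)
      have step2 : monomial (Finsupp.single x0 m + d'') c
          - monomial (nf m x0 S d) c ∈ genIdeal m x0 S := by
        rw [hnf]
        exact ih (n - m) (by omega) _ hsum
      have : monomial d c - monomial (nf m x0 S d) c
          = (monomial d c - monomial (Finsupp.single x0 m + d'') c)
            + (monomial (Finsupp.single x0 m + d'') c - monomial (nf m x0 S d) c) := by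
        ring
      rw [this]
      exact Ideal.add_mem _ step1 step2
    · push_neg at hcase
      have : nf m x0 S d = d := by
        ext i
        have hdiv : ∀ i ∈ S, d i / m = 0 := fun i hi =>
          Nat.div_eq_of_lt (hcase i hi)
        by_cases h1 : i = x0
        · subst h1
          simp [nf_apply, Finset.sum_eq_zero hdiv]
        · by_cases h2 : i ∈ S
          · simp only [nf_apply, if_neg h1, if_pos h2]
            exact Nat.mod_eq_of_lt (hcase i h2)
          · simp only [nf_apply, if_neg h1, if_neg h2]
      rw [this, sub_self]
      exact Ideal.zero_mem _

lemma sub_Phi_mem (hm : 1 ≤ m) (hx0 : x0 ∉ S) (f : MvPolynomial σ ℚ) :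
    f - Phi m x0 S f ∈ genIdeal m x0 S := by
  induction f using MvPolynomial.induction_on' with
  | monomial d c => rw [Phi_monomial]; exact monomial_sub_nf_mem hm hx0 d c
  | add p q hp hq =>
      rw [map_add]
      have : p + q - (Phi m x0 S p + Phi m x0 S q)
          = (p - Phi m x0 S p) + (q - Phi m x0 S q) := by ring
      rw [this]
      exact Ideal.add_mem _ hp hq

/-- Main lemma: a nonzero polynomial supported away from `S` is a
nonzerodivisor modulo `genIdeal m x0 S`. -/
lemma mem_of_mul_mem (hm : 1 ≤ m) (hx0 : x0 ∉ S) (g : MvPolynomial σ ℚ)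
    (hg : ∀ d ∈ g.support, ∀ j ∈ S, d j = 0) (hg0 : g ≠ 0)
    {f : MvPolynomial σ ℚ} (hf : g * f ∈ genIdeal m x0 S) :
    f ∈ genIdeal m x0 S := by
  have h1 : Phi m x0 S (g * f) = 0 := Phi_eq_zero_of_mem hm hx0 hf
  rw [Phi_mul hx0 g hg f] at h1
  have h2 : Phi m x0 S f = 0 := by
    rcases mul_eq_zero.mp h1 with h | h
    · exact absurd h hg0
    · exact h
  have := sub_Phi_mem hm hx0 f
  rwa [h2, sub_zero] at this

/-- Transfer to a regularity statement on the quotient. -/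
lemma isSMulRegular_quotient {R : Type*} [CommRing R] (I : Ideal R) (a b : R)
    (hab : a - b ∈ I) (h : ∀ f, b * f ∈ I → f ∈ I) :
    IsSMulRegular (R ⧸ (I • ⊤ : Submodule R R)) a := by
  have hI : (I • ⊤ : Submodule R R) = I := by
    rw [Ideal.smul_eq_mul, Ideal.mul_top]
  intro x y hxy
  obtain ⟨f, rfl⟩ := Submodule.Quotient.mk_surjective _ x
  obtain ⟨f', rfl⟩ := Submodule.Quotient.mk_surjective _ y
  have hxy' : a • Submodule.Quotient.mk (p := (I • ⊤ : Submodule R R)) f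
      = a • Submodule.Quotient.mk (p := (I • ⊤ : Submodule R R)) f' := hxy
  rw [← Submodule.Quotient.mk_smul, ← Submodule.Quotient.mk_smul,
    Submodule.Quotient.eq, hI] at hxy'
  rw [Submodule.Quotient.eq, hI]
  have : b * (f - f') ∈ I := by
    have e : b * (f - f') = (a • f - a • f') - (a - b) * (f - f') := by
      simp only [smul_eq_mul]; ring
    rw [e]
    exact Ideal.sub_mem _ hxy' (Ideal.mul_mem_right _ _ hab)
  exact h _ this

end Stmt1Aux

open RingTheory.Sequence in
theorem key (m N : ℕ) (hm : 1 ≤ m) (hN : 1 ≤ N) (x0 : Fin N) (hx00 : (x0 : ℕ) = 0)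
    (F : Fin N → MvPolynomial (Fin N) ℚ)
    (hF : ∀ j : Fin N, F j =
      if h : (j : ℕ) + 1 < N then
        X (⟨(j : ℕ) + 1, h⟩ : Fin N) ^ m - X x0 ^ m
      else
        -((∏ l ∈ Finset.univ.filter (fun l : Fin N => (l : ℕ) + 1 < N),
              (X l : MvPolynomial (Fin N) ℚ) ^ m)
            * X j ^ (2 * m))) :
    RingTheory.Sequence.IsWeaklyRegular (MvPolynomial (Fin N) ℚ) (List.ofFn F) := by
  rw [RingTheory.Sequence.isWeaklyRegular_iff]
  intro i hi
  rw [List.length_ofFn] at hi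
  set S : Finset (Fin N) := Finset.univ.filter (fun j : Fin N => 0 < (j : ℕ) ∧ (j : ℕ) ≤ i)
    with hS
  have hx0S : x0 ∉ S := by simp [hS, hx00]
  have hmemS : ∀ j : Fin N, j ∈ S ↔ 0 < (j : ℕ) ∧ (j : ℕ) ≤ i := by
    intro j; simp [hS]
  have hset : {r | r ∈ (List.ofFn F).take i} =
      (fun j : Fin N => (X j : MvPolynomial (Fin N) ℚ) ^ m - X x0 ^ m) '' ↑S := by
    ext r
    simp only [Set.mem_setOf_eq, List.mem_take_iff_getElem, List.getElem_ofFn,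
      List.length_ofFn, Set.mem_image, Finset.mem_coe]
    constructor
    · rintro ⟨k, hk, rfl⟩
      have hk' : k < i := by omega
      have hkN : k + 1 < N := by omega
      refine ⟨⟨k + 1, hkN⟩, (hmemS _).mpr ⟨by simp only [Fin.val_mk]; omega, by simp only [Fin.val_mk]; omega⟩, ?_⟩
      rw [hF, dif_pos hkN]
    · rintro ⟨j, hj, rfl⟩
      obtain ⟨hj1, hj2⟩ := (hmemS j).mp hj
      have hjN : (j : ℕ) < N := j.isLt
      refine ⟨(j : ℕ) - 1, by omega, ?_⟩
      have hlt : (j : ℕ) - 1 + 1 < N := by omega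
      rw [hF, dif_pos hlt]
      have hjeq : (⟨(j : ℕ) - 1 + 1, hlt⟩ : Fin N) = j :=
        Fin.ext (show (j : ℕ) - 1 + 1 = (j : ℕ) by omega)
      rw [hjeq]
  have hideal : Ideal.ofList ((List.ofFn F).take i) = Stmt1Aux.genIdeal m x0 S := by
    unfold Stmt1Aux.genIdeal
    exact congrArg Ideal.span hset
  rw [hideal, List.getElem_ofFn, hF]
  by_cases hcase : i + 1 < N
  · rw [dif_pos hcase]
    refine Stmt1Aux.isSMulRegular_quotient _ _ _
      (by rw [sub_self]; exact Ideal.zero_mem _) ?_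
    intro f hf
    refine Stmt1Aux.mem_of_mul_mem hm hx0S _ ?_ ?_ hf
    · intro d hd j hj
      obtain ⟨hj1, hj2⟩ := (hmemS j).mp hj
      have hd' : d ∈ (monomial (Finsupp.single (⟨i + 1, hcase⟩ : Fin N) m)
            (1 : ℚ)).support ∪ (monomial (Finsupp.single x0 m) (1 : ℚ)).support := by
        rw [← X_pow_eq_monomial, ← X_pow_eq_monomial]
        exact MvPolynomial.support_sub (Fin N) _ _ hd
      simp only [support_monomial, one_ne_zero, if_neg, if_false,
        Finset.mem_union, Finset.mem_singleton] at hd'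
      rcases hd' with rfl | rfl
      · rw [Finsupp.single_apply, if_neg]
        intro hh
        rw [Fin.ext_iff] at hh
        simp only [Fin.val_mk] at hh
        omega
      · rw [Finsupp.single_apply, if_neg]
        intro hh
        rw [Fin.ext_iff] at hh
        omega
    · intro h0
      have h1 := congrArg
        (MvPolynomial.coeff (Finsupp.single (⟨i + 1, hcase⟩ : Fin N) m)) h0
      rw [MvPolynomial.coeff_sub, MvPolynomial.coeff_X_pow,
        MvPolynomial.coeff_X_pow, MvPolynomial.coeff_zero] at h1
      have hne : ¬ (Finsupp.single x0 m
          = Finsupp.single (⟨i + 1, hcase⟩ : Fin N) m) := by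
        intro hh
        have h2 := Finsupp.single_left_injective (show m ≠ 0 by omega) hh
        rw [Fin.ext_iff] at h2
        simp only [Fin.val_mk] at h2
        omega
      rw [if_pos rfl, if_neg hne] at h1
      norm_num at h1
  · rw [dif_neg hcase]
    have hiN : i < N := hi
    set T : Finset (Fin N) := Finset.univ.filter (fun l : Fin N => (l : ℕ) + 1 < N)
      with hT
    set d0 : Fin N →₀ ℕ :=
      (∑ l ∈ T, Finsupp.single l m) + Finsupp.single (⟨i, hiN⟩ : Fin N) (2 * m)
      with hd0
    have hprodmon : ∀ s : Finset (Fin N),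
        (∏ l ∈ s, (X l : MvPolynomial (Fin N) ℚ) ^ m)
          = monomial (∑ l ∈ s, Finsupp.single l m) 1 := by
      intro s
      induction s using Finset.induction_on with
      | empty => simp
      | insert x s hx ih =>
          rw [Finset.prod_insert hx, Finset.sum_insert hx, ih,
            X_pow_eq_monomial, monomial_mul, one_mul]
    have hPmon : (∏ l ∈ T, (X l : MvPolynomial (Fin N) ℚ) ^ m)
        * X (⟨i, hiN⟩ : Fin N) ^ (2 * m) = monomial d0 1 := by
      rw [hprodmon, X_pow_eq_monomial, monomial_mul, one_mul, hd0]
    have hab :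
        -((∏ l ∈ Finset.univ.filter (fun l : Fin N => (l : ℕ) + 1 < N),
              (X l : MvPolynomial (Fin N) ℚ) ^ m)
            * X (⟨i, hiN⟩ : Fin N) ^ (2 * m))
          - -(monomial (Stmt1Aux.nf m x0 S d0) (1 : ℚ))
          ∈ Stmt1Aux.genIdeal m x0 S := by
      rw [← hT, hPmon, neg_sub_neg]
      simpa using neg_mem (Stmt1Aux.monomial_sub_nf_mem hm hx0S d0 1)
    refine Stmt1Aux.isSMulRegular_quotient _ _ _ hab ?_
    intro f hf
    refine Stmt1Aux.mem_of_mul_mem hm hx0S _ ?_ ?_ hf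
    · intro d hd j hj
      obtain ⟨hj1, hj2⟩ := (hmemS j).mp hj
      have hjx0 : j ≠ x0 := by
        intro hh; rw [Fin.ext_iff, hx00] at hh; omega
      rw [MvPolynomial.support_neg, support_monomial, if_neg one_ne_zero,
        Finset.mem_singleton] at hd
      subst hd
      rw [Stmt1Aux.nf_apply, if_neg hjx0, if_pos hj]
      have hdvd : m ∣ d0 j := by
        rw [hd0, Finsupp.add_apply, Finsupp.coe_finset_sum, Finset.sum_apply]
        refine Nat.dvd_add (Finset.dvd_sum fun l _ => ?_) ?_
        · rw [Finsupp.single_apply]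
          split_ifs
          · exact dvd_rfl
          · exact dvd_zero m
        · rw [Finsupp.single_apply]
          split_ifs
          · exact dvd_mul_left m 2
          · exact dvd_zero m
      obtain ⟨c, hc⟩ := hdvd
      rw [hc, Nat.mul_mod_right]
    · intro h0
      rw [neg_eq_zero, MvPolynomial.monomial_eq_zero] at h0
      exact one_ne_zero h0

open MvPolynomial in
/-- For integers `m ≥ 1` and `n ≥ 2`, the sequence
`(t₂^m − t₁^m, t₃^m − t₁^m, …, t_{n−1}^m − t₁^m, −t₁^m ⋯ t_{n−2}^m t_{n−1}^{2m})`
of `n − 1` elements is a regular sequence in `ℚ[t₁, …, t_{n−1}]`.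
(Variables `t₁, …, t_{n−1}` are `X 0, …, X (n−2)` in `MvPolynomial (Fin (n-1)) ℚ`.) -/
theorem stmt1 (m n : ℕ) (hm : 1 ≤ m) (hn : 2 ≤ n) :
    RingTheory.Sequence.IsWeaklyRegular (MvPolynomial (Fin (n - 1)) ℚ)
      (List.ofFn fun i : Fin (n - 1) =>
        if h : (i : ℕ) + 1 < n - 1 then
          X (⟨(i : ℕ) + 1, h⟩ : Fin (n - 1)) ^ m - X (⟨0, by omega⟩ : Fin (n - 1)) ^ m
        else
          -((∏ j ∈ Finset.univ.filter (fun j : Fin (n - 1) => (j : ℕ) + 1 < n - 1),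
                (X j : MvPolynomial (Fin (n - 1)) ℚ) ^ m)
              * X i ^ (2 * m))) := by
  exact key m (n - 1) hm (by omega) ⟨0, by omega⟩ rfl _ (fun j => rfl)
end

section
/- Let m ≥ 1 and n ≥ 4 be integers, and let k satisfy 3 ≤ k ≤ n−1. The quotient ring ℚ[t_1,…,t_{n−1}]/(t_2^m − t_1^m, t_3^m − t_1^m, …, t_{k−1}^m − t_1^m), regarded as a module over the subring ℚ[t_1, t_k, t_{k+1}, …, t_{n−1}] (via the composition of the inclusion into ℚ[t_1,…,t_{n−1}] with the quotient map), is free with basis given by the images of the monomials t_2^{s_2} ⋯ t_{k−1}^{s_{k−1}} with 0 ≤ s_j ≤ m−1 for all j ∈ {2,…,k−1}. -/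
set_option linter.unusedSectionVars false
set_option linter.unusedVariables false
set_option maxHeartbeats 1000000
set_option synthInstance.maxHeartbeats 200000

open MvPolynomial

namespace Stmt3Aux

noncomputable section

variable {σ τ : Type*} [Fintype τ] (m : ℕ) (ι : τ → σ) (i0 : σ)

def ind (d : σ →₀ ℕ) : σ →₀ ℕ := ∑ j : τ, Finsupp.single (ι j) (d (ι j))

def od (d : σ →₀ ℕ) : σ →₀ ℕ := d - ind ι d

def Qd (d : σ →₀ ℕ) : ℕ := ∑ j : τ, d (ι j) / m

def outE (d : σ →₀ ℕ) : σ →₀ ℕ := od ι d + Finsupp.single i0 (m * Qd m ι d)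

def outP (d : σ →₀ ℕ) : MvPolynomial σ ℚ := monomial (outE m ι i0 d) 1

def AA : Subalgebra ℚ (MvPolynomial σ ℚ) := MvPolynomial.supported ℚ ((Set.range ι)ᶜ)

def rmap (hm : 0 < m) (d : σ →₀ ℕ) : τ → Fin m :=
  fun j => ⟨d (ι j) % m, Nat.mod_lt _ hm⟩

variable {ι i0}

theorem ind_apply_mem (hι : Function.Injective ι) (d : σ →₀ ℕ) (j : τ) :
    ind ι d (ι j) = d (ι j) := by
  classical
  simp [ind, Finsupp.finset_sum_apply, Finsupp.single_apply, hι.eq_iff]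

theorem ind_apply_not (d : σ →₀ ℕ) {a : σ} (ha : a ∉ Set.range ι) : ind ι d a = 0 := by
  classical
  have : ∀ j : τ, ι j ≠ a := fun j h => ha ⟨j, h⟩
  simp [ind, Finsupp.finset_sum_apply, Finsupp.single_apply, this]

theorem od_apply_mem (hι : Function.Injective ι) (d : σ →₀ ℕ) (j : τ) :
    od ι d (ι j) = 0 := by
  simp [od, Finsupp.tsub_apply, ind_apply_mem hι]

theorem od_apply_not (d : σ →₀ ℕ) {a : σ} (ha : a ∉ Set.range ι) : od ι d a = d a := by
  simp [od, Finsupp.tsub_apply, ind_apply_not d ha]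

theorem od_add_ind (hι : Function.Injective ι) (d : σ →₀ ℕ) : od ι d + ind ι d = d := by
  ext a
  by_cases ha : a ∈ Set.range ι
  · obtain ⟨j, rfl⟩ := ha
    simp [od_apply_mem hι, ind_apply_mem hι]
  · simp [od_apply_not d ha, ind_apply_not d ha]

theorem outP_mem (hι : Function.Injective ι) (hi0 : i0 ∉ Set.range ι) (d : σ →₀ ℕ) :
    outP m ι i0 d ∈ AA ι := by
  classical
  rw [AA, MvPolynomial.mem_supported, outP, vars_monomial (one_ne_zero)]
  intro a ha
  rw [Finset.mem_coe, Finsupp.mem_support_iff] at ha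
  simp only [Set.mem_compl_iff]
  rintro ⟨j, rfl⟩
  apply ha
  rw [outE, Finsupp.add_apply, od_apply_mem hι, Finsupp.single_apply,
    if_neg (fun h => hi0 ⟨j, h.symm⟩)]
  rfl

def outA (hι : Function.Injective ι) (hi0 : i0 ∉ Set.range ι) (d : σ →₀ ℕ) : AA ι :=
  ⟨outP m ι i0 d, outP_mem m hι hi0 d⟩

def NN (hm : 0 < m) (hι : Function.Injective ι) (hi0 : i0 ∉ Set.range ι) :
    MvPolynomial σ ℚ →ₗ[ℚ] ((τ → Fin m) →₀ AA ι) :=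
  (MvPolynomial.basisMonomials σ ℚ).constr ℚ fun d =>
    Finsupp.single (rmap m ι hm d) (outA m hι hi0 d)

theorem NN_monomial (hm : 0 < m) (hι : Function.Injective ι) (hi0 : i0 ∉ Set.range ι)
    (d : σ →₀ ℕ) (c : ℚ) :
    NN m hm hι hi0 (monomial d c) =
      Finsupp.single (rmap m ι hm d) (c • outA m hι hi0 d) := by
  have h1 : (monomial d c : MvPolynomial σ ℚ) = c • (MvPolynomial.basisMonomials σ ℚ) d := by
    rw [coe_basisMonomials]
    simp [smul_monomial]
  rw [h1, map_smul, NN, Module.Basis.constr_basis, Finsupp.smul_single]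

theorem apply_add_single_outer (d : σ →₀ ℕ) {i : σ} (hi : i ∉ Set.range ι) (e : ℕ) (j : τ) :
    (d + Finsupp.single i e) (ι j) = d (ι j) := by
  classical
  rw [Finsupp.add_apply, Finsupp.single_apply, if_neg (fun h => hi ⟨j, h.symm⟩), add_zero]

theorem rmap_add_outer (hm : 0 < m) (d : σ →₀ ℕ) {i : σ} (hi : i ∉ Set.range ι) (e : ℕ) :
    rmap m ι hm (d + Finsupp.single i e) = rmap m ι hm d := by
  funext j
  refine Fin.ext ?_
  show ((d + Finsupp.single i e) (ι j)) % m = (d (ι j)) % m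
  rw [apply_add_single_outer d hi]

theorem Qd_add_outer (d : σ →₀ ℕ) {i : σ} (hi : i ∉ Set.range ι) (e : ℕ) :
    Qd m ι (d + Finsupp.single i e) = Qd m ι d := by
  unfold Qd
  exact Finset.sum_congr rfl fun j _ => by rw [apply_add_single_outer d hi]

theorem od_add_outer (hι : Function.Injective ι) (d : σ →₀ ℕ) {i : σ}
    (hi : i ∉ Set.range ι) (e : ℕ) :
    od ι (d + Finsupp.single i e) = od ι d + Finsupp.single i e := by
  classical
  ext a
  by_cases ha : a ∈ Set.range ι
  · obtain ⟨j, rfl⟩ := ha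
    rw [od_apply_mem hι, Finsupp.add_apply, od_apply_mem hι, Finsupp.single_apply,
      if_neg (fun h => hi ⟨j, h.symm⟩), add_zero]
  · rw [od_apply_not _ ha, Finsupp.add_apply, Finsupp.add_apply, od_apply_not _ ha]

theorem outE_add_outer (hι : Function.Injective ι) (d : σ →₀ ℕ) {i : σ}
    (hi : i ∉ Set.range ι) (e : ℕ) :
    outE m ι i0 (d + Finsupp.single i e) = outE m ι i0 d + Finsupp.single i e := by
  rw [outE, outE, od_add_outer hι d hi, Qd_add_outer m d hi]
  abel

theorem rmap_add_inner (hm : 0 < m) (hι : Function.Injective ι) (d : σ →₀ ℕ) (i : τ) :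
    rmap m ι hm (d + Finsupp.single (ι i) m) = rmap m ι hm d := by
  classical
  funext j
  refine Fin.ext ?_
  show ((d + Finsupp.single (ι i) m) (ι j)) % m = (d (ι j)) % m
  rw [Finsupp.add_apply, Finsupp.single_apply]
  by_cases h : ι i = ι j
  · rw [if_pos h, Nat.add_mod_right]
  · rw [if_neg h, add_zero]

theorem Qd_add_inner (hm : 0 < m) (hι : Function.Injective ι) (d : σ →₀ ℕ) (i : τ) :
    Qd m ι (d + Finsupp.single (ι i) m) = Qd m ι d + 1 := by
  classical
  unfold Qd
  have h : ∀ j : τ, (d + Finsupp.single (ι i) m) (ι j) / m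
      = d (ι j) / m + if i = j then 1 else 0 := by
    intro j
    rw [Finsupp.add_apply, Finsupp.single_apply]
    by_cases h : i = j
    · subst h
      rw [if_pos rfl, if_pos rfl, Nat.add_div_right _ hm]
    · rw [if_neg (fun hh => h (hι hh)), if_neg h, add_zero, add_zero]
  rw [Finset.sum_congr rfl fun j _ => h j, Finset.sum_add_distrib]
  simp

theorem od_add_inner (hι : Function.Injective ι) (d : σ →₀ ℕ) (i : τ) :
    od ι (d + Finsupp.single (ι i) m) = od ι d := by
  classical
  ext a
  by_cases ha : a ∈ Set.range ι
  · obtain ⟨j, rfl⟩ := ha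
    rw [od_apply_mem hι, od_apply_mem hι]
  · rw [od_apply_not _ ha, od_apply_not _ ha, Finsupp.add_apply, Finsupp.single_apply,
      if_neg (fun h => ha ⟨i, h⟩), add_zero]

theorem outE_add_inner (hm : 0 < m) (hι : Function.Injective ι) (d : σ →₀ ℕ) (i : τ) :
    outE m ι i0 (d + Finsupp.single (ι i) m) = outE m ι i0 d + Finsupp.single i0 m := by
  rw [outE, outE, od_add_inner m hι d i, Qd_add_inner m hm hι d i, mul_add, mul_one,
    Finsupp.single_add]
  abel

theorem outA_gen (hm : 0 < m) (hι : Function.Injective ι) (hi0 : i0 ∉ Set.range ι)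
    (d : σ →₀ ℕ) (i : τ) :
    outA m hι hi0 (d + Finsupp.single (ι i) m) = outA m hι hi0 (d + Finsupp.single i0 m) := by
  refine Subtype.ext ?_
  show outP m ι i0 _ = outP m ι i0 _
  rw [outP, outP, outE_add_inner m hm hι d i, outE_add_outer m hι d hi0 m]

theorem NN_gen (hm : 0 < m) (hι : Function.Injective ι) (hi0 : i0 ∉ Set.range ι)
    (d : σ →₀ ℕ) (c : ℚ) (i : τ) :
    NN m hm hι hi0 (monomial (d + Finsupp.single (ι i) m) c)
      = NN m hm hι hi0 (monomial (d + Finsupp.single i0 m) c) := by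
  rw [NN_monomial, NN_monomial, rmap_add_inner m hm hι d i, rmap_add_outer m hm d hi0 m,
    outA_gen m hm hι hi0 d i]

theorem NN_span (hm : 0 < m) (hι : Function.Injective ι) (hi0 : i0 ∉ Set.range ι)
    {x : MvPolynomial σ ℚ}
    (hx : x ∈ Ideal.span (Set.range fun i : τ => (X (ι i) ^ m - X i0 ^ m : MvPolynomial σ ℚ))) :
    NN m hm hι hi0 x = 0 := by
  have key : ∀ y ∈ Ideal.span (Set.range fun i : τ =>
      (X (ι i) ^ m - X i0 ^ m : MvPolynomial σ ℚ)),
      ∀ q : MvPolynomial σ ℚ, NN m hm hι hi0 (q * y) = 0 := by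
    intro y hy
    refine Submodule.span_induction ?_ ?_ ?_ ?_ hy
    · rintro _ ⟨i, rfl⟩ q
      induction q using MvPolynomial.induction_on' with
      | monomial d c =>
        rw [mul_sub, X_pow_eq_monomial, X_pow_eq_monomial, monomial_mul, monomial_mul,
          mul_one, map_sub, NN_gen m hm hι hi0 d c i, sub_self]
      | add p q hp hq =>
        rw [add_mul, map_add, hp, hq, add_zero]
    · intro q
      rw [mul_zero, map_zero]
    · intro a b _ _ hpa hpb q
      rw [mul_add, map_add, hpa, hpb, add_zero]
    · intro r a _ hpa q
      rw [smul_eq_mul, show q * (r * a) = q * r * a by ring, hpa]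
  have := key x hx 1
  rwa [one_mul] at this

theorem NN_mul_mem (hm : 0 < m) (hι : Function.Injective ι) (hi0 : i0 ∉ Set.range ι)
    {a : MvPolynomial σ ℚ} (ha : a ∈ AA ι) (p : MvPolynomial σ ℚ) :
    NN m hm hι hi0 (a * p) = (⟨a, ha⟩ : AA ι) • NN m hm hι hi0 p := by
  have ha' : a ∈ Algebra.adjoin ℚ ((fun i => (X i : MvPolynomial σ ℚ)) '' ((Set.range ι)ᶜ)) := ha
  revert p
  refine Algebra.adjoin_induction
    (p := fun x hx => ∀ p : MvPolynomial σ ℚ,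
      NN m hm hι hi0 (x * p) = (⟨x, hx⟩ : AA ι) • NN m hm hι hi0 p) ?_ ?_ ?_ ?_ ha'
  · rintro _ ⟨i, hi, rfl⟩ p
    have hXi : (X i : MvPolynomial σ ℚ) = monomial (Finsupp.single i 1) 1 := by
      rw [← pow_one (X i : MvPolynomial σ ℚ), X_pow_eq_monomial]
    induction p using MvPolynomial.induction_on' with
    | monomial d c =>
      have hmul : (X i : MvPolynomial σ ℚ) * monomial d c
          = monomial (d + Finsupp.single i 1) c := by
        rw [hXi, monomial_mul, one_mul, add_comm (Finsupp.single i 1) d]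
      rw [hmul, NN_monomial, NN_monomial,
        rmap_add_outer m hm d hi 1, Finsupp.smul_single]
      refine congrArg _ (Subtype.ext ?_)
      push_cast
      show c • outP m ι i0 (d + Finsupp.single i 1)
        = monomial (Finsupp.single i 1) 1 * (c • outP m ι i0 d : MvPolynomial σ ℚ)
      rw [outP, outP, outE_add_outer m hι d hi 1, smul_monomial, smul_monomial,
        monomial_mul, one_mul, add_comm]
    | add p q hp hq =>
      rw [mul_add, map_add, hp, hq, map_add, smul_add]
  · intro r p
    have hC : algebraMap ℚ (MvPolynomial σ ℚ) r = C r := rfl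
    have halg : (⟨algebraMap ℚ (MvPolynomial σ ℚ) r, Subalgebra.algebraMap_mem _ r⟩ : AA ι)
        = algebraMap ℚ (AA ι) r := rfl
    induction p using MvPolynomial.induction_on' with
    | monomial d c =>
      have hmul : algebraMap ℚ (MvPolynomial σ ℚ) r * monomial d c = monomial d (r * c) := by
        rw [hC, C_mul_monomial]
      rw [hmul, NN_monomial, NN_monomial, halg, algebraMap_smul,
        Finsupp.smul_single, smul_smul]
    | add p q hp hq =>
      rw [mul_add, map_add, hp, hq, map_add, smul_add]
  · intro x y hx hy ihx ihy p
    rw [add_mul, map_add, ihx, ihy,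
      show (⟨x + y, add_mem hx hy⟩ : AA ι) = ⟨x, hx⟩ + ⟨y, hy⟩ from rfl, add_smul]
  · intro x y hx hy ihx ihy p
    rw [mul_assoc, ihx, ihy,
      show (⟨x * y, mul_mem hx hy⟩ : AA ι) = ⟨x, hx⟩ * ⟨y, hy⟩ from rfl, mul_smul]

theorem monomial_sum_single (g : τ → σ) (e : τ → ℕ) :
    (monomial (∑ j : τ, Finsupp.single (g j) (e j)) (1:ℚ) : MvPolynomial σ ℚ)
      = ∏ j : τ, X (g j) ^ e j := by
  classical
  have key : ∀ s : Finset τ,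
      (monomial (∑ j ∈ s, Finsupp.single (g j) (e j)) (1:ℚ) : MvPolynomial σ ℚ)
        = ∏ j ∈ s, X (g j) ^ e j := by
    intro s
    induction s using Finset.induction_on with
    | empty => simp
    | @insert j s hj ih =>
      rw [Finset.sum_insert hj, Finset.prod_insert hj, ← ih, X_pow_eq_monomial,
        monomial_mul, one_mul]
  exact key Finset.univ

theorem sum_single_apply_mem (hι : Function.Injective ι) (e : τ → ℕ) (j : τ) :
    (∑ j' : τ, Finsupp.single (ι j') (e j')) (ι j) = e j := by
  classical
  simp [Finsupp.finset_sum_apply, Finsupp.single_apply, hι.eq_iff]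

theorem sum_single_apply_not (e : τ → ℕ) {a : σ} (ha : a ∉ Set.range ι) :
    (∑ j' : τ, Finsupp.single (ι j') (e j')) a = 0 := by
  classical
  have : ∀ j : τ, ι j ≠ a := fun j h => ha ⟨j, h⟩
  simp [Finsupp.finset_sum_apply, Finsupp.single_apply, this]

theorem NN_P (hm : 0 < m) (hι : Function.Injective ι) (hi0 : i0 ∉ Set.range ι) (s : τ → Fin m) :
    NN m hm hι hi0 (∏ j : τ, X (ι j) ^ ((s j : ℕ))) = Finsupp.single s 1 := by
  classical
  rw [← monomial_sum_single, NN_monomial]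
  have hr : rmap m ι hm (∑ j : τ, Finsupp.single (ι j) ((s j : ℕ))) = s := by
    funext j
    refine Fin.ext ?_
    show (∑ j' : τ, Finsupp.single (ι j') ((s j' : ℕ))) (ι j) % m = ((s j : ℕ))
    rw [sum_single_apply_mem hι, Nat.mod_eq_of_lt (s j).isLt]
  have hout : outA m hι hi0 (∑ j : τ, Finsupp.single (ι j) ((s j : ℕ))) = 1 := by
    refine Subtype.ext ?_
    show outP m ι i0 _ = 1
    have hQ : Qd m ι (∑ j : τ, Finsupp.single (ι j) ((s j : ℕ))) = 0 :=
      Finset.sum_eq_zero fun j _ => by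
        rw [sum_single_apply_mem hι, Nat.div_eq_of_lt (s j).isLt]
    have hod : od ι (∑ j : τ, Finsupp.single (ι j) ((s j : ℕ))) = 0 := by
      ext a
      by_cases ha : a ∈ Set.range ι
      · obtain ⟨j, rfl⟩ := ha
        rw [od_apply_mem hι]
        rfl
      · rw [od_apply_not _ ha, sum_single_apply_not _ ha]
        rfl
    rw [outP, outE, hQ, hod, mul_zero, Finsupp.single_zero, add_zero]
    simp
  rw [hr, hout, one_smul]

theorem poly_decomp (hι : Function.Injective ι) (d : σ →₀ ℕ) (c : ℚ) :
    (monomial d c : MvPolynomial σ ℚ)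
      = C c * (monomial (od ι d) 1 * ∏ j : τ, X (ι j) ^ (d (ι j))) := by
  rw [← monomial_sum_single, monomial_mul, one_mul, C_mul_monomial, mul_one,
    show od ι d + (∑ j : τ, Finsupp.single (ι j) (d (ι j))) = d from od_add_ind hι d]

theorem mk_mono (hm : 0 < m) (hι : Function.Injective ι) (hi0 : i0 ∉ Set.range ι)
    (I : Ideal (MvPolynomial σ ℚ))
    (hI : I = Ideal.span (Set.range fun i : τ => (X (ι i) ^ m - X i0 ^ m : MvPolynomial σ ℚ)))
    (d : σ →₀ ℕ) (c : ℚ) :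
    Ideal.Quotient.mk I (monomial d c)
      = Ideal.Quotient.mk I (C c * (outP m ι i0 d *
          ∏ j : τ, X (ι j) ^ ((rmap m ι hm d j : ℕ)))) := by
  have hX : ∀ (j : τ) (t : ℕ), Ideal.Quotient.mk I ((X (ι j) : MvPolynomial σ ℚ) ^ t)
      = Ideal.Quotient.mk I (X i0 ^ (m * (t / m)) * X (ι j) ^ (t % m)) := by
    intro j t
    have hgen : Ideal.Quotient.mk I ((X (ι j) : MvPolynomial σ ℚ) ^ m)
        = Ideal.Quotient.mk I (X i0 ^ m) := by
      rw [Ideal.Quotient.mk_eq_mk_iff_sub_mem, hI]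
      exact Ideal.subset_span ⟨j, rfl⟩
    conv_lhs => rw [show t = m * (t / m) + t % m from (Nat.div_add_mod t m).symm]
    rw [pow_add, pow_mul, map_mul, map_pow, hgen, ← map_pow, ← pow_mul, ← map_mul]
  have hpoly : C c * (monomial (od ι d) (1:ℚ) *
        ∏ j : τ, (X i0 ^ (m * (d (ι j) / m)) * X (ι j) ^ (d (ι j) % m)))
      = C c * (outP m ι i0 d * ∏ j : τ, X (ι j) ^ (d (ι j) % m)) := by
    rw [Finset.prod_mul_distrib, Finset.prod_pow_eq_pow_sum, ← Finset.mul_sum,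
      X_pow_eq_monomial (n := i0), outP, outE]
    rw [show (monomial (od ι d + Finsupp.single i0 (m * Qd m ι d)) (1:ℚ) : MvPolynomial σ ℚ)
        = monomial (od ι d) 1 * monomial (Finsupp.single i0 (m * Qd m ι d)) 1 by
      rw [monomial_mul, one_mul]]
    simp only [Qd]
    ring
  calc Ideal.Quotient.mk I (monomial d c)
      = Ideal.Quotient.mk I (C c) * (Ideal.Quotient.mk I (monomial (od ι d) 1) *
          ∏ j : τ, Ideal.Quotient.mk I ((X (ι j) : MvPolynomial σ ℚ) ^ (d (ι j)))) := by
        rw [← map_prod, ← map_mul, ← map_mul, ← poly_decomp hι d c]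
    _ = Ideal.Quotient.mk I (C c) * (Ideal.Quotient.mk I (monomial (od ι d) 1) *
          ∏ j : τ, Ideal.Quotient.mk I
            (X i0 ^ (m * (d (ι j) / m)) * X (ι j) ^ (d (ι j) % m))) := by
        rw [Finset.prod_congr rfl fun j _ => hX j (d (ι j))]
    _ = Ideal.Quotient.mk I (C c * (monomial (od ι d) 1 *
          ∏ j : τ, (X i0 ^ (m * (d (ι j) / m)) * X (ι j) ^ (d (ι j) % m)))) := by
        rw [← map_prod, ← map_mul, ← map_mul]
    _ = Ideal.Quotient.mk I (C c * (outP m ι i0 d *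
          ∏ j : τ, X (ι j) ^ (d (ι j) % m))) := by rw [hpoly]

theorem main (hm : 0 < m) (hι : Function.Injective ι) (hi0 : i0 ∉ Set.range ι)
    (I : Ideal (MvPolynomial σ ℚ))
    (hI : I = Ideal.span (Set.range fun i : τ =>
      (X (ι i) ^ m - X i0 ^ m : MvPolynomial σ ℚ))) :
    ∃ b : @Module.Basis (τ → Fin m) (AA ι) (MvPolynomial σ ℚ ⧸ I) _ _
        (RingHom.toModule ((Ideal.Quotient.mk I).comp (AA ι).val.toRingHom)),
      ∀ s : τ → Fin m, b s = Ideal.Quotient.mk I (∏ j : τ, X (ι j) ^ ((s j : ℕ))) := by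
  classical
  letI : Module (AA ι) (MvPolynomial σ ℚ ⧸ I) :=
    RingHom.toModule ((Ideal.Quotient.mk I).comp (AA ι).val.toRingHom)
  have smul_def : ∀ (a : AA ι) (q : MvPolynomial σ ℚ ⧸ I),
      a • q = Ideal.Quotient.mk I (a : MvPolynomial σ ℚ) * q := fun _ _ => rfl
  let f : ((τ → Fin m) →₀ AA ι) →ₗ[AA ι] (MvPolynomial σ ℚ ⧸ I) :=
    { toFun := fun x => x.sum fun s a =>
        Ideal.Quotient.mk I ((a : MvPolynomial σ ℚ) * ∏ j : τ, X (ι j) ^ ((s j : ℕ)))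
      map_add' := by
        intro x y
        apply Finsupp.sum_add_index'
        · intro s
          simp
        · intro s a b
          push_cast
          rw [add_mul, map_add]
      map_smul' := by
        intro c x
        rw [RingHom.id_apply]
        show ((c • x).sum fun s a =>
            Ideal.Quotient.mk I ((a : MvPolynomial σ ℚ) * ∏ j : τ, X (ι j) ^ ((s j : ℕ))))
          = c • (x.sum fun s a =>
            Ideal.Quotient.mk I ((a : MvPolynomial σ ℚ) * ∏ j : τ, X (ι j) ^ ((s j : ℕ))))
        rw [Finsupp.sum_smul_index']
        · rw [Finsupp.smul_sum]
          refine Finsupp.sum_congr fun s _ => ?_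
          rw [show ((c • x s : AA ι) : MvPolynomial σ ℚ)
              = (c : MvPolynomial σ ℚ) * (x s : MvPolynomial σ ℚ) from rfl,
            mul_assoc, map_mul, smul_def]
        · intro s
          simp }
  have f_single : ∀ (s : τ → Fin m) (a : AA ι), f (Finsupp.single s a)
      = Ideal.Quotient.mk I ((a : MvPolynomial σ ℚ) * ∏ j : τ, X (ι j) ^ ((s j : ℕ))) := by
    intro s a
    show ((Finsupp.single s a).sum fun s a =>
        Ideal.Quotient.mk I ((a : MvPolynomial σ ℚ) * ∏ j : τ, X (ι j) ^ ((s j : ℕ)))) = _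
    rw [Finsupp.sum_single_index (by simp)]
  have hker : ∀ x, f x = 0 → x = 0 := by
    intro x hx
    set y := x.sum fun (s : τ → Fin m) (a : AA ι) =>
      ((a : MvPolynomial σ ℚ) * ∏ j : τ, X (ι j) ^ ((s j : ℕ))) with hy_def
    have hfy : f x = Ideal.Quotient.mk I y := by
      rw [hy_def, map_finsuppSum]
      rfl
    have hy : y ∈ I := by
      rw [← Ideal.Quotient.eq_zero_iff_mem, ← hfy]
      exact hx
    have h1 : NN m hm hι hi0 y = x := by
      rw [hy_def, map_finsuppSum]
      calc x.sum (fun s a => NN m hm hι hi0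
            ((a : MvPolynomial σ ℚ) * ∏ j : τ, X (ι j) ^ ((s j : ℕ))))
          = x.sum (fun s a => Finsupp.single s a) := by
            refine Finsupp.sum_congr fun s hs => ?_
            rw [NN_mul_mem m hm hι hi0 (x s).2, NN_P m hm hι hi0, Finsupp.smul_single,
              smul_eq_mul, mul_one]
        _ = x := Finsupp.sum_single x
    have h0 := NN_span m hm hι hi0 (hI ▸ hy)
    rw [h1] at h0
    exact h0
  have hinj : Function.Injective f := by
    intro a b hab
    have := hker (a - b) (by rw [show f (a - b) = f a - f b from map_sub f a b, hab, sub_self])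
    exact sub_eq_zero.mp this
  have hsurj : Function.Surjective f := by
    intro q
    obtain ⟨p, rfl⟩ := Ideal.Quotient.mk_surjective q
    induction p using MvPolynomial.induction_on' with
    | monomial d c =>
      refine ⟨Finsupp.single (rmap m ι hm d) (c • outA m hι hi0 d), ?_⟩
      rw [f_single, mk_mono m hm hι hi0 I hI d c,
        show ((c • outA m hι hi0 d : AA ι) : MvPolynomial σ ℚ)
          = C c * outP m ι i0 d by
            rw [show ((c • outA m hι hi0 d : AA ι) : MvPolynomial σ ℚ)
                = c • outP m ι i0 d from rfl, smul_eq_C_mul],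
        mul_assoc]
    | add p q hp hq =>
      obtain ⟨xp, hxp⟩ := hp
      obtain ⟨xq, hxq⟩ := hq
      exact ⟨xp + xq, by rw [map_add, hxp, hxq, map_add]⟩
  let e := LinearEquiv.ofBijective f ⟨hinj, hsurj⟩
  refine ⟨Module.Basis.ofRepr e.symm, ?_⟩
  intro s
  have h1 : f (Finsupp.single s 1) = Ideal.Quotient.mk I (∏ j : τ, X (ι j) ^ ((s j : ℕ))) := by
    rw [f_single, OneMemClass.coe_one, one_mul]
  have h2 : (Module.Basis.ofRepr e.symm).repr ((Module.Basis.ofRepr e.symm) s) = Finsupp.single s 1 :=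
    (Module.Basis.ofRepr e.symm).repr_self s
  have h2' : e.symm ((Module.Basis.ofRepr e.symm) s) = Finsupp.single s 1 := h2
  have h3 := congrArg e h2'
  rw [LinearEquiv.apply_symm_apply] at h3
  rw [h3, ← h1]
  rfl

end

end Stmt3Aux

open MvPolynomial in
/-- For `m ≥ 1`, `n ≥ 4`, `3 ≤ k ≤ n−1`, the quotient
`ℚ[t₁,…,t_{n−1}]/(t₂^m − t₁^m, …, t_{k−1}^m − t₁^m)` is a free module over the subring
`ℚ[t₁, t_k, …, t_{n−1}]` (acting via the inclusion followed by the quotient map),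
with basis the images of the monomials `t₂^{s₂} ⋯ t_{k−1}^{s_{k−1}}`, `0 ≤ s_j ≤ m − 1`. -/
theorem stmt3 (m n k : ℕ) (hm : 1 ≤ m) (hn : 4 ≤ n) (hk1 : 3 ≤ k) (hk2 : k ≤ n - 1)
    (I : Ideal (MvPolynomial (Fin (n - 1)) ℚ))
    (hI : I = Ideal.span (Set.range fun i : Fin (k - 2) =>
      X (⟨(i : ℕ) + 1, by have := i.2; omega⟩ : Fin (n - 1)) ^ m
        - X (⟨0, by omega⟩ : Fin (n - 1)) ^ m))
    (A : Subalgebra ℚ (MvPolynomial (Fin (n - 1)) ℚ))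
    (hA : A = Algebra.adjoin ℚ
      ((fun i => (X i : MvPolynomial (Fin (n - 1)) ℚ)) ''
        {i : Fin (n - 1) | (i : ℕ) = 0 ∨ k - 1 ≤ (i : ℕ)})) :
    ∃ b : @Module.Basis (Fin (k - 2) → Fin m) A (MvPolynomial (Fin (n - 1)) ℚ ⧸ I) _ _
        (RingHom.toModule ((Ideal.Quotient.mk I).comp A.val.toRingHom)),
      ∀ s : Fin (k - 2) → Fin m,
        b s = Ideal.Quotient.mk I
          (∏ j : Fin (k - 2),
            X (⟨(j : ℕ) + 1, by have := j.2; omega⟩ : Fin (n - 1)) ^ (s j : ℕ)) := by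
  set ι : Fin (k - 2) → Fin (n - 1) :=
    fun i => (⟨(i : ℕ) + 1, by have := i.2; omega⟩ : Fin (n - 1)) with hιdef
  have hι : Function.Injective ι := by
    intro a b hab
    have : (a : ℕ) + 1 = (b : ℕ) + 1 := congrArg Fin.val hab
    exact Fin.ext (by omega)
  set i0 : Fin (n - 1) := (⟨0, by omega⟩ : Fin (n - 1)) with hi0def
  have hi0 : i0 ∉ Set.range ι := by
    rintro ⟨j, hj⟩
    have := congrArg Fin.val hj
    simp [hιdef, hi0def] at this
  have hset : {i : Fin (n - 1) | (i : ℕ) = 0 ∨ k - 1 ≤ (i : ℕ)} = (Set.range ι)ᶜ := by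
    ext i
    simp only [Set.mem_setOf_eq, Set.mem_compl_iff, Set.mem_range]
    constructor
    · rintro h ⟨j, rfl⟩
      have hj := j.2
      have : (ι j : ℕ) = (j : ℕ) + 1 := rfl
      omega
    · intro h
      by_contra hc
      push_neg at hc
      obtain ⟨h1, h2⟩ := hc
      refine h ⟨⟨(i : ℕ) - 1, by have := i.2; omega⟩, Fin.ext ?_⟩
      show (i : ℕ) - 1 + 1 = (i : ℕ)
      omega
  have hA' : A = Stmt3Aux.AA ι := by
    rw [hA, Stmt3Aux.AA, MvPolynomial.supported, hset]
  subst hA'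
  exact Stmt3Aux.main m hm hι hi0 I hI
end

section
/- Let n ≥ 2, let p ∈ ℚ[t] be a polynomial and set q(t) = t·p(t). Then in ℚ[t_1,…,t_n] the identity a_{(p,1,0,…,0)} = a_{(p,0,0,…,0)} · e_1 − a_{(q,0,0,…,0)} holds, where e_1 = t_1 + t_2 + ⋯ + t_n. -/
open MvPolynomial

/-- The extended alternant `a_{(p, λ₂, …, λ_n)}`: the determinant of the `n × n` matrix whose
first row is `(p(t₁), …, p(t_n))` and whose row `i` (for `1 ≤ i ≤ n−1`, 0-based) is
`(t₁^{e i}, …, t_n^{e i})`, where `e` records the exponents `λ_{i+1} + n − (i+1)`. -/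
noncomputable def altDet (n : ℕ) (p : Polynomial ℚ) (e : ℕ → ℕ) :
    MvPolynomial (Fin n) ℚ :=
  (Matrix.of fun i j : Fin n =>
    if (i : ℕ) = 0 then Polynomial.aeval (X j) p else X j ^ e (i : ℕ)).det

lemma det_mul_sum_X {n : ℕ} (M : Matrix (Fin n) (Fin n) (MvPolynomial (Fin n) ℚ)) :
    M.det * (∑ j : Fin n, X j)
      = ∑ r : Fin n, (M.updateRow r (fun j => X j * M r j)).det := by
  have hprod : ∀ (r : Fin n) (σ : Equiv.Perm (Fin n)),
      (∏ i, (M.updateRow r (fun j => X j * M r j)) (σ i) i)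
        = X (σ.symm r) * ∏ i, M (σ i) i := by
    intro r σ
    have h1 : ∀ i : Fin n, (M.updateRow r (fun j => X j * M r j)) (σ i) i
        = (if i = σ.symm r then X i else 1) * M (σ i) i := by
      intro i
      rw [Matrix.updateRow_apply]
      by_cases h : σ i = r
      · have hi : i = σ.symm r := by rw [← h, Equiv.symm_apply_apply]
        rw [if_pos h, if_pos hi, ← h]
      · have hi : ¬ i = σ.symm r := by
          intro hi; apply h; rw [hi, Equiv.apply_symm_apply]
        rw [if_neg h, if_neg hi, one_mul]
    rw [Finset.prod_congr rfl (fun i _ => h1 i), Finset.prod_mul_distrib,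
      Finset.prod_ite_eq' Finset.univ (σ.symm r) (fun i => X i)]
    simp
  simp only [Matrix.det_apply', hprod]
  rw [Finset.sum_comm, Finset.sum_mul]
  refine Finset.sum_congr rfl fun σ _ => ?_
  rw [← Finset.mul_sum, ← Finset.sum_mul, Equiv.sum_comp σ.symm (fun j => X j)]
  ring

/-- For `n ≥ 2`, `p ∈ ℚ[t]` and `q(t) = t·p(t)`, the identity
`a_{(p,1,0,…,0)} = a_{(p,0,…,0)} · e₁ − a_{(q,0,…,0)}` holds in `ℚ[t₁,…,t_n]`,
where `e₁ = t₁ + ⋯ + t_n`. -/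
theorem stmt6 (n : ℕ) (hn : 2 ≤ n) (p : Polynomial ℚ) :
    altDet n p (fun i => if i = 1 then n - 1 else n - 1 - i)
      = altDet n p (fun i => n - 1 - i) * (∑ j : Fin n, X j)
        - altDet n (p * Polynomial.X) (fun i => n - 1 - i) := by
  haveI : NeZero n := ⟨by omega⟩
  set M : Matrix (Fin n) (Fin n) (MvPolynomial (Fin n) ℚ) :=
    Matrix.of (fun i j : Fin n =>
      if (i : ℕ) = 0 then Polynomial.aeval (X j) p else X j ^ (n - 1 - (i : ℕ))) with hM
  have key := det_mul_sum_X M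
  have hv1 : ((1 : Fin n) : ℕ) = 1 := by
    rw [Fin.val_one' n]; exact Nat.mod_eq_of_lt (by omega)
  have hD0 : (M.updateRow 0 (fun j => X j * M 0 j)).det
      = altDet n (p * Polynomial.X) (fun i => n - 1 - i) := by
    unfold altDet
    refine congrArg Matrix.det (Matrix.ext fun i j => ?_)
    rw [Matrix.updateRow_apply]
    by_cases h : i = 0
    · subst h
      simp [hM, mul_comm]
    · have h' : (i : ℕ) ≠ 0 := by
        intro hc; exact h (Fin.ext (by simp [hc]))
      simp [hM, h, h']
  have hD1 : (M.updateRow 1 (fun j => X j * M 1 j)).det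
      = altDet n p (fun i => if i = 1 then n - 1 else n - 1 - i) := by
    unfold altDet
    refine congrArg Matrix.det (Matrix.ext fun i j => ?_)
    rw [Matrix.updateRow_apply]
    by_cases h : i = 1
    · subst h
      simp only [hM, Matrix.of_apply, hv1]
      norm_num
      rw [show n - 1 = (n - 1 - 1) + 1 by omega]
      exact (pow_succ' _ _).symm
    · have hne : (i : ℕ) ≠ 1 := by
        intro hc; exact h (Fin.ext (by rw [hc, hv1]))
      simp only [hM, Matrix.of_apply, if_neg h]
      by_cases h0 : (i : ℕ) = 0
      · simp [h0]
      · simp [h0, hne]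
  have hD2 : ∀ r : Fin n, (r : ℕ) ≠ 0 → (r : ℕ) ≠ 1 →
      (M.updateRow r (fun j => X j * M r j)).det = 0 := by
    intro r h0 h1
    have hrn : (r : ℕ) < n := r.isLt
    set r' : Fin n := ⟨(r : ℕ) - 1, by omega⟩ with hr'
    have hne : r' ≠ r := by
      intro hc
      have h : (r : ℕ) - 1 = (r : ℕ) := congrArg Fin.val hc
      omega
    apply Matrix.det_zero_of_row_eq (show r ≠ r' from fun hc => hne hc.symm)
    rw [Matrix.updateRow_self, Matrix.updateRow_ne hne]
    funext j
    simp only [hM, Matrix.of_apply]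
    rw [if_neg h0, if_neg (show ¬ (((r' : Fin n) : ℕ) = 0) from by
      intro hc
      have h : (r : ℕ) - 1 = 0 := hc
      omega)]
    show X j * X j ^ (n - 1 - (r : ℕ)) = X j ^ (n - 1 - ((r : ℕ) - 1))
    rw [show n - 1 - ((r : ℕ) - 1) = (n - 1 - (r : ℕ)) + 1 by omega]
    exact (pow_succ' _ _).symm
  have hsum : ∑ r : Fin n, (M.updateRow r (fun j => X j * M r j)).det
      = altDet n (p * Polynomial.X) (fun i => n - 1 - i)
        + altDet n p (fun i => if i = 1 then n - 1 else n - 1 - i) := by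
    rw [Finset.sum_eq_add_of_mem (0 : Fin n) (1 : Fin n) (Finset.mem_univ _)
      (Finset.mem_univ _)
      (by intro hc; have := congrArg Fin.val hc; rw [hv1] at this; simp at this)
      (fun c _ hc => hD2 c
        (fun h => hc.1 (Fin.ext (by simp [h])))
        (fun h => hc.2 (Fin.ext (by rw [h, hv1]))))]
    rw [hD0, hD1]
  have hplain : altDet n p (fun i => n - 1 - i) = M.det := rfl
  rw [hplain, key, hsum]
  ring
end

section
/- Let n ≥ 2 and let F(t) = Σ_{i=0}^d μ_i t^i ∈ ℚ[t]. Then for every j ∈ {0,…,n−2} the identity q_j = Δ · (Σ_{i=0}^d μ_i h_{i+j−(n−1)}) holds in ℚ[t_1,…,t_n], where Δ = ∏_{1≤i<j≤n} (t_i − t_j) is the Vandermonde determinant and h_k denotes the complete homogeneous symmetric polynomial of degree k in t_1,…,t_n (with the conventions h_0 = 1 and h_k = 0 for k < 0). -/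
open MvPolynomial

/-- `q_i`: the determinant of the `n × n` matrix whose first row is
`(F(t₁)t₁^i, …, F(t_n)t_n^i)` and whose `r`-th row (`1 ≤ r ≤ n−1`, 0-based) is
`(t₁^{n−1−r}, …, t_n^{n−1−r})`. -/
noncomputable def qdet (n : ℕ) (F : Polynomial ℚ) (i : ℕ) : MvPolynomial (Fin n) ℚ :=
  (Matrix.of fun r c : Fin n =>
    if (r : ℕ) = 0 then Polynomial.aeval (X c) F * X c ^ i
    else X c ^ (n - 1 - (r : ℕ))).det

/-- The Vandermonde determinant `Δ = ∏_{i<j} (t_i − t_j)`. -/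
noncomputable def vander (n : ℕ) : MvPolynomial (Fin n) ℚ :=
  ∏ ij ∈ Finset.univ.filter (fun ij : Fin n × Fin n => ij.1 < ij.2), (X ij.1 - X ij.2)

/-- The complete homogeneous symmetric polynomial of degree `k` in `t₁, …, t_n`:
the sum of all monomials of total degree `k`. -/
noncomputable def completeHomog (n k : ℕ) : MvPolynomial (Fin n) ℚ :=
  ∑ d ∈ Finset.Nat.antidiagonalTuple n k, ∏ i : Fin n, X i ^ d i

/-- `h_k` for an integer `k`, with the convention `h_k = 0` for `k < 0`. -/
noncomputable def hInt (n : ℕ) (k : ℤ) : MvPolynomial (Fin n) ℚ :=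
  if k < 0 then 0 else completeHomog n k.toNat

open Finset Matrix

section Aux

theorem pairprod (n : ℕ) {M : Type*} [CommMonoid M] (f : Fin n → Fin n → M) :
    ∏ p ∈ Finset.univ.filter (fun p : Fin n × Fin n => p.1 < p.2), f p.1 p.2
      = ∏ i, ∏ j ∈ Finset.Ioi i, f i j := by
  rw [Finset.prod_sigma']
  refine Finset.prod_nbij' (fun p => ⟨p.1, p.2⟩) (fun x => (x.1, x.2)) ?_ ?_ ?_ ?_ ?_ <;>
    simp [Finset.mem_sigma, Finset.mem_Ioi]

noncomputable def Dmat (n m : ℕ) : Matrix (Fin n) (Fin n) (MvPolynomial (Fin n) ℚ) :=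
  Matrix.of fun r c => if (r:ℕ) = 0 then X c ^ m else X c ^ (n - 1 - (r:ℕ))

noncomputable def D (n m : ℕ) : MvPolynomial (Fin n) ℚ := (Dmat n m).det

theorem D_base (n : ℕ) : D n (n-1) = vander n := by
  have h1 : (Dmat n (n-1)).submatrix Fin.revPerm Fin.revPerm
      = (Matrix.vandermonde (fun i : Fin n => X (Fin.rev i)))ᵀ := by
    ext r c : 2
    have hr : (Fin.rev r : ℕ) = n - (r + 1) := Fin.val_rev r
    have hr2 : r.val < n := r.isLt
    simp only [Dmat, Matrix.submatrix_apply, Matrix.of_apply, Matrix.transpose_apply,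
      Matrix.vandermonde_apply, Fin.revPerm_apply, hr]
    split <;> rename_i h
    · rw [show n - 1 = (r:ℕ) by omega]
    · rw [show n - 1 - (n - ((r:ℕ) + 1)) = (r:ℕ) by omega]
  have h2 : D n (n-1) = ((Matrix.vandermonde (fun i : Fin n => X (Fin.rev i)))ᵀ).det := by
    rw [D, ← Matrix.det_submatrix_equiv_self Fin.revPerm, h1]
  rw [h2, Matrix.det_transpose, Matrix.det_vandermonde, vander]
  rw [← pairprod n (fun a b => (X (Fin.rev b) - X (Fin.rev a) : MvPolynomial (Fin n) ℚ))]
  refine Finset.prod_nbij' (fun p => (Fin.rev p.2, Fin.rev p.1))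
    (fun p => (Fin.rev p.2, Fin.rev p.1)) ?_ ?_ ?_ ?_ ?_ <;>
    simp [Fin.rev_lt_rev]

theorem D_zero (n m : ℕ) (h : m + 2 ≤ n) : D n m = 0 := by
  apply Matrix.det_zero_of_row_eq (i := (⟨0, by omega⟩ : Fin n)) (j := ⟨n - 1 - m, by omega⟩)
  · intro e
    rw [Fin.ext_iff] at e
    simp at e
    omega
  · funext c
    simp only [Dmat, Matrix.of_apply]
    rw [if_pos trivial, if_neg (show ¬(n-1-m = 0) by omega),
      show n - 1 - (n - 1 - m) = m by omega]

theorem row_rel (n m : ℕ) (hm : n ≤ m) (c : Fin n) :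
    ∑ S ∈ (univ : Finset (Fin n)).powerset,
      (-1)^S.card * (∏ j ∈ S, X j) * (X c : MvPolynomial (Fin n) ℚ)^(m - S.card) = 0 := by
  have h0 : (∏ j : Fin n, (-X j + X c) : MvPolynomial (Fin n) ℚ) = 0 :=
    Finset.prod_eq_zero (mem_univ c) (by ring)
  rw [Finset.prod_add] at h0
  have h1 : (X c : MvPolynomial (Fin n) ℚ)^(m-n) *
      ∑ S ∈ (univ : Finset (Fin n)).powerset, (∏ j ∈ S, -X j) * ∏ j ∈ univ \ S, X c = 0 := by
    rw [h0, mul_zero]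
  rw [Finset.mul_sum] at h1
  rw [← h1]
  apply Finset.sum_congr rfl
  intro S hS
  have hcard : S.card ≤ n := by
    simpa using Finset.card_le_card (Finset.mem_powerset.mp hS)
  rw [Finset.prod_const]
  rw [Finset.card_sdiff_of_subset (Finset.mem_powerset.mp hS), Finset.card_univ, Fintype.card_fin]
  have : ∏ j ∈ S, (-X j : MvPolynomial (Fin n) ℚ) = (-1)^S.card * ∏ j ∈ S, X j := by
    rw [← Finset.prod_const, ← Finset.prod_mul_distrib]
    exact Finset.prod_congr rfl (fun j _ => by ring)
  rw [this]
  rw [show m - S.card = (m - n) + (n - S.card) by omega, pow_add]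
  ring

theorem det_updateRow_finset_sum {R : Type*} [CommRing R] {n' : Type*} [DecidableEq n'] [Fintype n']
    {ι : Type*} [DecidableEq ι] (M : Matrix n' n' R) (i : n') (s : Finset ι) (v : ι → n' → R) :
    (M.updateRow i (∑ k ∈ s, v k)).det = ∑ k ∈ s, (M.updateRow i (v k)).det := by
  induction s using Finset.induction_on with
  | empty => simp; exact Matrix.det_eq_zero_of_row_eq_zero i (fun j => by simp)
  | @insert a s' hk ih =>
    rw [Finset.sum_insert hk, Finset.sum_insert hk, Matrix.det_updateRow_add, ih]

theorem Dmat_updateRow (n k l : ℕ) (hn : 0 < n) :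
    (Dmat n l).updateRow ⟨0,hn⟩ (fun c => (X c : MvPolynomial (Fin n) ℚ) ^ k) = Dmat n k := by
  ext r c : 2
  rw [Matrix.updateRow_apply]
  by_cases hr : r = ⟨0, hn⟩
  · subst hr; simp [Dmat]
  · rw [if_neg hr]
    have : (r : ℕ) ≠ 0 := fun h => hr (Fin.ext h)
    simp [Dmat, this]

theorem D_rec (n m : ℕ) (hn : 0 < n) (hm : n ≤ m) :
    ∑ S ∈ (univ : Finset (Fin n)).powerset,
      (-1)^S.card * (∏ j ∈ S, X j) * D n (m - S.card) = 0 := by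
  have e1 : ∀ S ∈ (univ : Finset (Fin n)).powerset,
      (-1:MvPolynomial (Fin n) ℚ)^S.card * (∏ j ∈ S, X j) * D n (m - S.card)
      = ((Dmat n 0).updateRow ⟨0,hn⟩
          ((((-1:MvPolynomial (Fin n) ℚ)^S.card * ∏ j ∈ S, X j)) •
            (fun c => X c ^ (m - S.card)))).det := by
    intro S _
    rw [Matrix.det_updateRow_smul, Dmat_updateRow n (m - S.card) 0 hn]
    rfl
  rw [Finset.sum_congr rfl e1, ← det_updateRow_finset_sum]
  have e2 : (∑ S ∈ (univ : Finset (Fin n)).powerset,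
      (((-1:MvPolynomial (Fin n) ℚ)^S.card * ∏ j ∈ S, X j)) •
        (fun c => (X c : MvPolynomial (Fin n) ℚ) ^ (m - S.card))) = 0 := by
    funext c
    rw [Finset.sum_apply]
    simpa [smul_eq_mul, mul_assoc] using row_rel n m hm c
  rw [e2]
  exact Matrix.det_eq_zero_of_row_eq_zero ⟨0,hn⟩ (fun j => by rw [Matrix.updateRow_self]; rfl)

abbrev PairT (n : ℕ) := Σ _ : Finset (Fin n), (Fin n → ℕ)

def AA (n : ℕ) (p : PairT n) : Finset (Fin n) :=
  p.1 ∪ univ.filter (fun i => p.2 i ≠ 0)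

noncomputable def gg (n : ℕ) (p : PairT n) : PairT n :=
  if hA : (AA n p).Nonempty then
    (if (AA n p).min' hA ∈ p.1 then
      ⟨p.1.erase ((AA n p).min' hA),
        Function.update p.2 ((AA n p).min' hA) (p.2 ((AA n p).min' hA) + 1)⟩
     else
      ⟨insert ((AA n p).min' hA) p.1,
        Function.update p.2 ((AA n p).min' hA) (p.2 ((AA n p).min' hA) - 1)⟩)
  else p

theorem AA_nonempty (n : ℕ) (p : PairT n) (hp : 1 ≤ p.1.card + ∑ i, p.2 i) :
    (AA n p).Nonempty := by
  by_contra h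
  rw [Finset.not_nonempty_iff_eq_empty, AA, Finset.union_eq_empty] at h
  have h1 : p.1.card = 0 := by rw [h.1]; simp
  have h2 : ∑ i, p.2 i = 0 := by
    apply Finset.sum_eq_zero
    intro i _
    by_contra hi
    have : i ∈ univ.filter (fun i => p.2 i ≠ 0) := by simp [hi]
    rw [h.2] at this
    exact absurd this (Finset.notMem_empty i)
  omega

theorem gg_spec (n : ℕ) (p : PairT n) (hp : 1 ≤ p.1.card + ∑ i, p.2 i) :
    ∃ j : Fin n,
      ((j ∈ p.1 ∧ gg n p = ⟨p.1.erase j, Function.update p.2 j (p.2 j + 1)⟩) ∨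
       (j ∉ p.1 ∧ p.2 j ≠ 0 ∧ gg n p = ⟨insert j p.1, Function.update p.2 j (p.2 j - 1)⟩)) := by
  have hA := AA_nonempty n p hp
  refine ⟨(AA n p).min' hA, ?_⟩
  have hmem := Finset.min'_mem (AA n p) hA
  by_cases hj : (AA n p).min' hA ∈ p.1
  · left
    exact ⟨hj, by rw [gg, dif_pos hA, if_pos hj]⟩
  · right
    refine ⟨hj, ?_, by rw [gg, dif_pos hA, if_neg hj]⟩
    rcases Finset.mem_union.mp hmem with h | h
    · exact absurd h hj
    · exact (Finset.mem_filter.mp h).2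

theorem gg_invol (n : ℕ) (p : PairT n) (hp : 1 ≤ p.1.card + ∑ i, p.2 i) :
    gg n (gg n p) = p := by
  have hA := AA_nonempty n p hp
  set j := (AA n p).min' hA with hjdef
  have hmem : j ∈ AA n p := Finset.min'_mem _ _
  have hle : ∀ i ∈ AA n p, j ≤ i := fun i hi => Finset.min'_le _ i hi
  by_cases hj : j ∈ p.1
  · have hq : gg n p = ⟨p.1.erase j, Function.update p.2 j (p.2 j + 1)⟩ := by
      rw [gg, dif_pos hA, if_pos hj]
    set q : PairT n := ⟨p.1.erase j, Function.update p.2 j (p.2 j + 1)⟩ with hqdef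
    have hjq : j ∈ AA n q := by
      apply Finset.mem_union_right
      simp [hqdef, Function.update_self]
    have hsub : AA n q ⊆ AA n p := by
      intro i hi
      rcases Finset.mem_union.mp hi with h | h
      · exact Finset.mem_union_left _ (Finset.mem_of_mem_erase h)
      · by_cases hij : i = j
        · subst hij; exact hmem
        · apply Finset.mem_union_right
          obtain ⟨-, h2⟩ := Finset.mem_filter.mp h
          have h3 : q.snd i = p.snd i := Function.update_of_ne hij _ _
          rw [h3] at h2
          exact Finset.mem_filter.mpr ⟨Finset.mem_univ i, h2⟩
    have hAq : (AA n q).Nonempty := ⟨j, hjq⟩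
    have hminq : (AA n q).min' hAq = j :=
      le_antisymm (Finset.min'_le _ j hjq) (hle _ (hsub (Finset.min'_mem _ hAq)))
    have hjq1 : (AA n q).min' hAq ∉ q.1 := by
      rw [hminq, hqdef]
      exact Finset.notMem_erase j p.1
    rw [hq, gg, dif_pos hAq, if_neg hjq1, hminq]
    show (⟨insert j (p.1.erase j), Function.update q.2 j (q.2 j - 1)⟩ : PairT n) = p
    have h1 : insert j (p.1.erase j) = p.1 := Finset.insert_erase hj
    have h2 : Function.update q.2 j (q.2 j - 1) = p.2 := by
      show Function.update (Function.update p.2 j (p.2 j + 1)) j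
        (Function.update p.2 j (p.2 j + 1) j - 1) = p.2
      rw [Function.update_self, Function.update_idem, Nat.add_sub_cancel,
        Function.update_eq_self]
    rw [h1, h2]
  · have hd : p.2 j ≠ 0 := by
      rcases Finset.mem_union.mp hmem with h | h
      · exact absurd h hj
      · exact (Finset.mem_filter.mp h).2
    have hq : gg n p = ⟨insert j p.1, Function.update p.2 j (p.2 j - 1)⟩ := by
      rw [gg, dif_pos hA, if_neg hj]
    set q : PairT n := ⟨insert j p.1, Function.update p.2 j (p.2 j - 1)⟩ with hqdef
    have hjq : j ∈ AA n q := Finset.mem_union_left _ (Finset.mem_insert_self j p.1)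
    have hsub : AA n q ⊆ AA n p := by
      intro i hi
      rcases Finset.mem_union.mp hi with h | h
      · rcases Finset.mem_insert.mp h with h | h
        · subst h; exact hmem
        · exact Finset.mem_union_left _ h
      · by_cases hij : i = j
        · subst hij; exact hmem
        · apply Finset.mem_union_right
          obtain ⟨-, h2⟩ := Finset.mem_filter.mp h
          have h3 : q.snd i = p.snd i := Function.update_of_ne hij _ _
          rw [h3] at h2
          exact Finset.mem_filter.mpr ⟨Finset.mem_univ i, h2⟩
    have hAq : (AA n q).Nonempty := ⟨j, hjq⟩
    have hminq : (AA n q).min' hAq = j :=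
      le_antisymm (Finset.min'_le _ j hjq) (hle _ (hsub (Finset.min'_mem _ hAq)))
    have hjq1 : (AA n q).min' hAq ∈ q.1 := by
      rw [hminq]
      exact Finset.mem_insert_self j p.1
    rw [hq, gg, dif_pos hAq, if_pos hjq1, hminq]
    show (⟨(insert j p.1).erase j, Function.update q.2 j (q.2 j + 1)⟩ : PairT n) = p
    have h1 : (insert j p.1).erase j = p.1 := Finset.erase_insert hj
    have h2 : Function.update q.2 j (q.2 j + 1) = p.2 := by
      show Function.update (Function.update p.2 j (p.2 j - 1)) j
        (Function.update p.2 j (p.2 j - 1) j + 1) = p.2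
      rw [Function.update_self, Function.update_idem,
        Nat.sub_add_cancel (Nat.one_le_iff_ne_zero.mpr hd), Function.update_eq_self]
    rw [h1, h2]

theorem sum_update_univ (n : ℕ) (d : Fin n → ℕ) (j : Fin n) (v : ℕ) :
    ∑ i, Function.update d j v i = v + ∑ i ∈ univ.erase j, d i := by
  rw [Finset.sum_update_of_mem (Finset.mem_univ j)]
  rw [Finset.sdiff_singleton_eq_erase]

theorem sum_eq_add_erase (n : ℕ) (d : Fin n → ℕ) (j : Fin n) :
    ∑ i, d i = d j + ∑ i ∈ univ.erase j, d i :=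
  (Finset.add_sum_erase univ d (Finset.mem_univ j)).symm

theorem gg_total (n : ℕ) (p : PairT n) (hp : 1 ≤ p.1.card + ∑ i, p.2 i) :
    (gg n p).1.card + ∑ i, (gg n p).2 i = p.1.card + ∑ i, p.2 i := by
  obtain ⟨j, hcase⟩ := gg_spec n p hp
  rcases hcase with ⟨hj, hgg⟩ | ⟨hj, hd, hgg⟩
  · rw [hgg]
    show (p.1.erase j).card + ∑ i, Function.update p.2 j (p.2 j + 1) i = _
    rw [Finset.card_erase_of_mem hj, sum_update_univ, sum_eq_add_erase n p.2 j]
    have : 1 ≤ p.1.card := Finset.card_pos.mpr ⟨j, hj⟩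
    omega
  · rw [hgg]
    show (insert j p.1).card + ∑ i, Function.update p.2 j (p.2 j - 1) i = _
    rw [Finset.card_insert_of_notMem hj, sum_update_univ, sum_eq_add_erase n p.2 j]
    have : 1 ≤ p.2 j := Nat.one_le_iff_ne_zero.mpr hd
    omega

theorem gg_ne (n : ℕ) (p : PairT n) (hp : 1 ≤ p.1.card + ∑ i, p.2 i) :
    gg n p ≠ p := by
  obtain ⟨j, hcase⟩ := gg_spec n p hp
  rcases hcase with ⟨hj, hgg⟩ | ⟨hj, hd, hgg⟩
  · rw [hgg]
    intro h
    have := congrArg Sigma.fst h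
    simp only at this
    rw [← this] at hj
    exact Finset.notMem_erase j p.1 hj
  · rw [hgg]
    intro h
    have := congrArg Sigma.fst h
    simp only at this
    rw [← this] at hj
    exact hj (Finset.mem_insert_self j p.1)

noncomputable def FF (n : ℕ) (p : PairT n) : MvPolynomial (Fin n) ℚ :=
  (-1)^p.1.card * (∏ j ∈ p.1, X j) * ∏ i, X i ^ p.2 i

theorem prod_pow_update (n : ℕ) (d : Fin n → ℕ) (j : Fin n) (v : ℕ) :
    ∏ i, (X i : MvPolynomial (Fin n) ℚ) ^ (Function.update d j v i)
      = X j ^ v * ∏ i ∈ univ.erase j, X i ^ d i := by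
  rw [← Finset.mul_prod_erase univ _ (Finset.mem_univ j), Function.update_self]
  congr 1
  apply Finset.prod_congr rfl
  intro i hi
  rw [Function.update_of_ne (Finset.mem_erase.mp hi).1]

theorem FF_anti (n : ℕ) (p : PairT n) (hp : 1 ≤ p.1.card + ∑ i, p.2 i) :
    FF n p + FF n (gg n p) = 0 := by
  obtain ⟨j, hcase⟩ := gg_spec n p hp
  rcases hcase with ⟨hj, hgg⟩ | ⟨hj, hd, hgg⟩
  · rw [hgg]
    show FF n p + (-1)^(p.1.erase j).card * (∏ i ∈ p.1.erase j, X i)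
      * ∏ i, X i ^ (Function.update p.2 j (p.2 j + 1) i) = 0
    rw [FF, prod_pow_update, Finset.card_erase_of_mem hj,
      ← Finset.mul_prod_erase p.1 _ hj,
      ← Finset.mul_prod_erase univ
        (fun i => (X i : MvPolynomial (Fin n) ℚ) ^ p.2 i) (Finset.mem_univ j)]
    obtain ⟨c, hc⟩ : ∃ c, p.1.card = c + 1 :=
      ⟨p.1.card - 1, by have := Finset.card_pos.mpr ⟨j, hj⟩; omega⟩
    rw [hc]
    simp only [Nat.add_sub_cancel, pow_succ]
    ring
  · rw [hgg]
    show FF n p + (-1)^(insert j p.1).card * (∏ i ∈ insert j p.1, X i)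
      * ∏ i, X i ^ (Function.update p.2 j (p.2 j - 1) i) = 0
    rw [FF, prod_pow_update, Finset.card_insert_of_notMem hj,
      Finset.prod_insert hj,
      ← Finset.mul_prod_erase univ
        (fun i => (X i : MvPolynomial (Fin n) ℚ) ^ p.2 i) (Finset.mem_univ j)]
    obtain ⟨e, he⟩ : ∃ e, p.2 j = e + 1 :=
      ⟨p.2 j - 1, by have := Nat.one_le_iff_ne_zero.mpr hd; omega⟩
    rw [he]
    simp only [Nat.add_sub_cancel, pow_succ]
    ring

theorem h_rec (n k : ℕ) (hk : 1 ≤ k) :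
    ∑ S ∈ (univ : Finset (Fin n)).powerset,
      (-1)^S.card * (∏ j ∈ S, X j) * hInt n ((k:ℤ) - S.card) = 0 := by
  classical
  set T : Finset (PairT n) :=
    ((univ : Finset (Fin n)).powerset.filter (fun S => S.card ≤ k)).sigma
      (fun S => Finset.Nat.antidiagonalTuple n (k - S.card)) with hT
  have memT : ∀ p : PairT n, p ∈ T ↔ p.1.card + ∑ i, p.2 i = k := by
    rintro ⟨S, dd⟩
    simp only [hT, Finset.mem_sigma, Finset.mem_filter, Finset.mem_powerset,
      Finset.Nat.mem_antidiagonalTuple]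
    constructor
    · rintro ⟨⟨-, h1⟩, h2⟩; omega
    · intro h; exact ⟨⟨Finset.subset_univ S, by omega⟩, by omega⟩
  have main : ∑ p ∈ T, FF n p = 0 := by
    apply Finset.sum_involution (fun p _ => gg n p)
    · intro p hp; exact FF_anti n p (by rw [memT p] at hp; omega)
    · intro p hp _; exact gg_ne n p (by rw [memT p] at hp; omega)
    · intro p hp; rw [memT] at hp ⊢; rw [gg_total n p (by omega)]; exact hp
    · intro p hp; exact gg_invol n p (by rw [memT p] at hp; omega)
  calc ∑ S ∈ (univ : Finset (Fin n)).powerset,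
        (-1)^S.card * (∏ j ∈ S, X j) * hInt n ((k:ℤ) - S.card)
      = ∑ S ∈ (univ : Finset (Fin n)).powerset.filter (fun S => S.card ≤ k),
        (-1)^S.card * (∏ j ∈ S, X j) * hInt n ((k:ℤ) - S.card) := by
        refine (Finset.sum_filter_of_ne ?_).symm
        intro S _ hS
        by_contra hc
        apply hS
        rw [hInt, if_pos (by push_neg at hc; omega : ((k:ℤ) - S.card) < 0), mul_zero]
    _ = ∑ S ∈ (univ : Finset (Fin n)).powerset.filter (fun S => S.card ≤ k),
        ∑ dd ∈ Finset.Nat.antidiagonalTuple n (k - S.card), FF n ⟨S, dd⟩ := by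
        refine Finset.sum_congr rfl ?_
        intro S hS
        have hcard : S.card ≤ k := (Finset.mem_filter.mp hS).2
        rw [hInt, if_neg (by omega : ¬((k:ℤ) - S.card) < 0),
          show ((k:ℤ) - S.card).toNat = k - S.card by omega, completeHomog, Finset.mul_sum]
        rfl
    _ = ∑ p ∈ T, FF n p := by rw [hT, Finset.sum_sigma]
    _ = 0 := main

theorem hInt_zero (n : ℕ) : hInt n 0 = 1 := by
  rw [hInt, if_neg (by omega), Int.toNat_zero, completeHomog,
    Finset.Nat.antidiagonalTuple_zero_right]
  simp

theorem D_eq (n : ℕ) (hn : 0 < n) (m : ℕ) :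
    D n m = vander n * hInt n ((m:ℤ) - ((n:ℤ) - 1)) := by
  induction m using Nat.strong_induction_on with
  | _ m ih =>
  by_cases h1 : m + 2 ≤ n
  · rw [D_zero n m h1, hInt, if_pos (by omega), mul_zero]
  · by_cases h2 : m = n - 1
    · subst h2
      rw [D_base, show ((n - 1 : ℕ):ℤ) - ((n:ℤ) - 1) = 0 by omega, hInt_zero, mul_one]
    · have hm : n ≤ m := by omega
      have hD := D_rec n m hn hm
      rw [← Finset.add_sum_erase _ _ (Finset.empty_mem_powerset (univ : Finset (Fin n)))] at hD
      simp only [Finset.card_empty, pow_zero, Finset.prod_empty, one_mul, mul_one,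
        Nat.sub_zero] at hD
      have hh := h_rec n (m - (n - 1)) (by omega)
      rw [← Finset.add_sum_erase _ _ (Finset.empty_mem_powerset (univ : Finset (Fin n)))] at hh
      simp only [Finset.card_empty, pow_zero, Finset.prod_empty, one_mul, mul_one,
        Nat.cast_zero, sub_zero] at hh
      have key : ∀ S ∈ ((univ : Finset (Fin n)).powerset).erase ∅,
          (-1)^S.card * (∏ j ∈ S, X j) * D n (m - S.card)
          = vander n * ((-1)^S.card * (∏ j ∈ S, X j)
              * hInt n (((m - (n-1) : ℕ) : ℤ) - S.card)) := by
        intro S hS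
        obtain ⟨hne, hsub⟩ := Finset.mem_erase.mp hS
        have hc1 : 1 ≤ S.card := Finset.card_pos.mpr (Finset.nonempty_iff_ne_empty.mpr hne)
        have hcn : S.card ≤ n := by
          simpa using Finset.card_le_card (Finset.mem_powerset.mp hsub)
        rw [ih (m - S.card) (by omega),
          show ((m - S.card : ℕ) : ℤ) - ((n:ℤ) - 1) = ((m - (n-1) : ℕ) : ℤ) - S.card by omega]
        ring
      rw [Finset.sum_congr rfl key, ← Finset.mul_sum] at hD
      rw [show (m:ℤ) - ((n:ℤ) - 1) = ((m - (n-1) : ℕ) : ℤ) by omega]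
      linear_combination hD - vander n * hh

theorem qdet_eq' (n : ℕ) (hn : 0 < n) (F : Polynomial ℚ) (j : ℕ) :
    qdet n F j = ((Dmat n 0).updateRow ⟨0,hn⟩
      (fun c => Polynomial.aeval (X c) F * X c ^ j)).det := by
  unfold qdet
  congr 1
  refine Matrix.ext fun r c => ?_
  rw [Matrix.updateRow_apply]
  by_cases hr : r = ⟨0, hn⟩
  · subst hr; simp
  · have h0 : (r:ℕ) ≠ 0 := fun h => hr (Fin.ext h)
    simp [Dmat, h0, hr]

end Aux


/-- Let `n ≥ 2` and `F(t) = Σ_{i=0}^d μ_i t^i`.  For every `j ∈ {0,…,n−2}`,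
`q_j = Δ · (Σ_{i=0}^d μ_i h_{i+j−(n−1)})` in `ℚ[t₁,…,t_n]`. -/

theorem stmt7 (n : ℕ) (hn : 2 ≤ n) (d : ℕ) (μ : ℕ → ℚ) (F : Polynomial ℚ)
    (hF : F = ∑ i ∈ Finset.range (d + 1), Polynomial.C (μ i) * Polynomial.X ^ i)
    (j : ℕ) (hj : j ≤ n - 2) :
    qdet n F j = vander n *
      ∑ i ∈ Finset.range (d + 1),
        C (μ i) * hInt n ((i : ℤ) + (j : ℤ) - ((n : ℤ) - 1)) := by
  have hn0 : 0 < n := by omega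
  classical
  rw [qdet_eq' n hn0 F j]
  have hrow : (fun c => Polynomial.aeval (X c : MvPolynomial (Fin n) ℚ) F * X c ^ j)
      = ∑ i ∈ Finset.range (d+1),
          (C (μ i) : MvPolynomial (Fin n) ℚ) • (fun c => (X c : MvPolynomial (Fin n) ℚ) ^ (i + j)) := by
    funext c
    rw [hF, Finset.sum_apply, map_sum (Polynomial.aeval (X c)), Finset.sum_mul]
    apply Finset.sum_congr rfl
    intro i _
    simp only [_root_.map_mul, Polynomial.aeval_C, map_pow, Polynomial.aeval_X,
      Pi.smul_apply, smul_eq_mul, MvPolynomial.algebraMap_eq, pow_add]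
    ring
  rw [hrow, det_updateRow_finset_sum]
  have key : ∀ i ∈ Finset.range (d+1),
      ((Dmat n 0).updateRow ⟨0,hn0⟩
        ((C (μ i) : MvPolynomial (Fin n) ℚ) • fun c => (X c : MvPolynomial (Fin n) ℚ) ^ (i+j))).det
      = vander n * (C (μ i) * hInt n ((i:ℤ) + (j:ℤ) - ((n:ℤ) - 1))) := by
    intro i _
    rw [Matrix.det_updateRow_smul, Dmat_updateRow n (i+j) 0 hn0,
      show (Dmat n (i+j)).det = D n (i+j) from rfl, D_eq n hn0 (i+j),
      show ((i+j : ℕ) : ℤ) - ((n:ℤ) - 1) = (i:ℤ) + (j:ℤ) - ((n:ℤ) - 1) by push_cast; ring]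
    ring
  rw [Finset.sum_congr rfl key, ← Finset.mul_sum]
end

section
/- Let n ≥ 3, let F ∈ ℚ[t] and let k ∈ {0,…,n−3}. Then in ℚ[t_1,…,t_n], Θ((F(t_2) − F(t_1)) · t_1^k · ∏_{j=2}^n t_j^{n−j}) = −q_k. -/
open MvPolynomial

/-- The antisymmetrisation operator `Θ(p) = Σ_{σ ∈ S_n} sign(σ) · σ∗p`, where
`σ∗p` permutes the variables of `p` by `σ`. -/
noncomputable def theta (n : ℕ) (p : MvPolynomial (Fin n) ℚ) : MvPolynomial (Fin n) ℚ :=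
  ∑ σ : Equiv.Perm (Fin n), (Equiv.Perm.sign σ : ℤ) • rename σ p

/-- Let `n ≥ 3`, `F ∈ ℚ[t]` and `k ∈ {0,…,n−3}`.  Then
`Θ((F(t₂) − F(t₁)) · t₁^k · ∏_{j=2}^n t_j^{n−j}) = −q_k` in `ℚ[t₁,…,t_n]`. -/
theorem stmt12 (n : ℕ) (hn : 3 ≤ n) (F : Polynomial ℚ) (k : ℕ) (hk : k + 3 ≤ n) :
    theta n ((Polynomial.aeval (X (⟨1, by omega⟩ : Fin n)) F
        - Polynomial.aeval (X (⟨0, by omega⟩ : Fin n)) F)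
      * ∏ c : Fin n, X c ^ (if (c : ℕ) = 0 then k else n - 1 - (c : ℕ)))
      = -qdet n F k := by
  classical
  have h0 : (0:ℕ) < n := by omega
  have h1 : (1:ℕ) < n := by omega
  set i0 : Fin n := ⟨0, h0⟩ with hi0
  set i1 : Fin n := ⟨1, h1⟩ with hi1
  set j : Fin n := ⟨n - 1 - k, by omega⟩ with hj
  set e : Fin n → ℕ := fun c => if (c : ℕ) = 0 then k else n - 1 - (c : ℕ) with he
  have hej : e j = k := by
    simp only [he, hj]
    rw [if_neg (by omega)]
    omega
  have hj0 : j ≠ i0 := by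
    simp only [hj, hi0, Ne, Fin.mk.injEq]; omega
  have hj1 : j ≠ i1 := by
    simp only [hj, hi1, Ne, Fin.mk.injEq]; omega
  -- rename computation
  have hrename : ∀ σ : Equiv.Perm (Fin n),
      rename σ ((Polynomial.aeval (X i1) F - Polynomial.aeval (X i0) F)
        * ∏ c : Fin n, X c ^ e c)
      = (Polynomial.aeval (X (σ i1) : MvPolynomial (Fin n) ℚ) F - Polynomial.aeval (X (σ i0) : MvPolynomial (Fin n) ℚ) F)
        * ∏ c : Fin n, X (σ c) ^ e c := by
    intro σ
    rw [map_mul, map_sub, ← Polynomial.aeval_algHom_apply, ← Polynomial.aeval_algHom_apply,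
      map_prod]
    simp
  have expand : theta n ((Polynomial.aeval (X i1) F - Polynomial.aeval (X i0) F)
        * ∏ c : Fin n, X c ^ e c)
      = (∑ σ : Equiv.Perm (Fin n), (Equiv.Perm.sign σ : ℤ) •
          (Polynomial.aeval (X (σ i1) : MvPolynomial (Fin n) ℚ) F * ∏ c : Fin n, X (σ c) ^ e c))
        - ∑ σ : Equiv.Perm (Fin n), (Equiv.Perm.sign σ : ℤ) •
          (Polynomial.aeval (X (σ i0) : MvPolynomial (Fin n) ℚ) F * ∏ c : Fin n, X (σ c) ^ e c) := by
    rw [theta, ← Finset.sum_sub_distrib]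
    refine Finset.sum_congr rfl fun σ _ => ?_
    rw [hrename σ, ← smul_sub, sub_mul]
  have claimA : (∑ σ : Equiv.Perm (Fin n), (Equiv.Perm.sign σ : ℤ) •
          (Polynomial.aeval (X (σ i1) : MvPolynomial (Fin n) ℚ) F * ∏ c : Fin n, X (σ c) ^ e c)) = 0 := by
    set s : Equiv.Perm (Fin n) := Equiv.swap i0 j with hs
    have h10 : i1 ≠ i0 := by simp [hi0, hi1, Fin.ext_iff]
    have hes : ∀ c, e (s c) = e c := by
      intro c
      rcases eq_or_ne c i0 with h|h
      · subst h
        rw [hs, Equiv.swap_apply_left, hej]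
        simp [he, hi0]
      rcases eq_or_ne c j with h'|h'
      · subst h'
        rw [hs, Equiv.swap_apply_right, hej]
        simp [he, hi0]
      · rw [hs, Equiv.swap_apply_of_ne_of_ne h h']
    have hA : (∑ σ : Equiv.Perm (Fin n), (Equiv.Perm.sign σ : ℤ) •
          (Polynomial.aeval (X (σ i1) : MvPolynomial (Fin n) ℚ) F * ∏ c : Fin n, X (σ c) ^ e c))
        = - ∑ σ : Equiv.Perm (Fin n), (Equiv.Perm.sign σ : ℤ) •
          (Polynomial.aeval (X (σ i1) : MvPolynomial (Fin n) ℚ) F * ∏ c : Fin n, X (σ c) ^ e c) := by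
      rw [← Finset.sum_neg_distrib]
      refine Fintype.sum_equiv (Equiv.mulRight s) _ _ fun σ => ?_
      have hsign : Equiv.Perm.sign (σ * s) = - Equiv.Perm.sign σ := by
        rw [map_mul, hs, Equiv.Perm.sign_swap (Ne.symm hj0), mul_neg_one]
      have h1' : (σ * s) i1 = σ i1 := by
        have : s i1 = i1 := by
          rw [hs, Equiv.swap_apply_of_ne_of_ne h10 (Ne.symm hj1)]
        rw [Equiv.Perm.mul_apply, this]
      have hprod : (∏ c : Fin n, X ((σ * s) c) ^ e c : MvPolynomial (Fin n) ℚ)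
          = ∏ c : Fin n, X (σ c) ^ e c := by
        calc (∏ c : Fin n, X ((σ * s) c) ^ e c : MvPolynomial (Fin n) ℚ)
            = ∏ c : Fin n, X (σ (s c)) ^ e (s c) := by
              refine Finset.prod_congr rfl fun c _ => ?_
              rw [hes c, Equiv.Perm.mul_apply]
          _ = ∏ c : Fin n, X (σ c) ^ e c :=
              Equiv.prod_comp s (fun c => (X (σ c) ^ e c : MvPolynomial (Fin n) ℚ))
      show _ = -((Equiv.Perm.sign (σ * s) : ℤ) •
          (Polynomial.aeval (X ((σ * s) i1) : MvPolynomial (Fin n) ℚ) F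
            * ∏ c : Fin n, X ((σ * s) c) ^ e c))
      rw [hsign, h1', hprod]
      push_cast
      rw [neg_smul, neg_neg]
    have h2 : (2:ℚ) • (∑ σ : Equiv.Perm (Fin n), (Equiv.Perm.sign σ : ℤ) •
          (Polynomial.aeval (X (σ i1) : MvPolynomial (Fin n) ℚ) F * ∏ c : Fin n, X (σ c) ^ e c)) = 0 := by
      rw [two_smul]
      nth_rewrite 2 [hA]
      exact add_neg_cancel _
    have h3 := congrArg (fun x => (2:ℚ)⁻¹ • x) h2
    simpa [smul_smul] using h3
  have claimB : (∑ σ : Equiv.Perm (Fin n), (Equiv.Perm.sign σ : ℤ) •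
          (Polynomial.aeval (X (σ i0) : MvPolynomial (Fin n) ℚ) F * ∏ c : Fin n, X (σ c) ^ e c)) = qdet n F k := by
    have hM : qdet n F k = ∑ σ : Equiv.Perm (Fin n), Equiv.Perm.sign σ • ∏ i : Fin n,
        (if (i:ℕ) = 0 then Polynomial.aeval (X (σ i) : MvPolynomial (Fin n) ℚ) F * X (σ i) ^ k
         else X (σ i) ^ (n - 1 - (i:ℕ))) := by
      rw [qdet, ← Matrix.det_transpose, Matrix.det_apply]
      rfl
    rw [hM]
    refine Finset.sum_congr rfl fun σ _ => ?_
    rw [Units.smul_def]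
    congr 1
    have hcond : ∀ i : Fin n, ((i:ℕ) = 0) = (i = i0) := fun i => by
      simp [Fin.ext_iff, hi0]
    calc Polynomial.aeval (X (σ i0) : MvPolynomial (Fin n) ℚ) F * ∏ c : Fin n, X (σ c) ^ e c
        = (∏ i : Fin n, (if i = i0 then Polynomial.aeval (X (σ i) : MvPolynomial (Fin n) ℚ) F else 1))
          * ∏ i : Fin n, X (σ i) ^ e i := by
          rw [Finset.prod_ite_eq' Finset.univ i0
            (fun i => Polynomial.aeval (X (σ i) : MvPolynomial (Fin n) ℚ) F)]
          simp
      _ = ∏ i : Fin n, ((if i = i0 then Polynomial.aeval (X (σ i) : MvPolynomial (Fin n) ℚ) F else 1)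
            * X (σ i) ^ e i) := (Finset.prod_mul_distrib).symm
      _ = ∏ i : Fin n, (if (i:ℕ) = 0 then Polynomial.aeval (X (σ i) : MvPolynomial (Fin n) ℚ) F * X (σ i) ^ k
            else X (σ i) ^ (n - 1 - (i:ℕ))) := by
          refine Finset.prod_congr rfl fun i _ => ?_
          by_cases h : (i:ℕ) = 0
          · have hi : i = i0 := Fin.ext (by simp [hi0, h])
            rw [if_pos hi, if_pos h]
            simp only [he]
            rw [if_pos h]
          · have hi : i ≠ i0 := fun hh => h (by simp [hh, hi0])
            rw [if_neg hi, if_neg h, one_mul]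
            simp only [he]
            rw [if_neg h]
  have goal : theta n ((Polynomial.aeval (X i1) F - Polynomial.aeval (X i0) F)
        * ∏ c : Fin n, X c ^ e c) = -qdet n F k := by
    rw [expand, claimA, claimB, zero_sub]
  exact goal
end

section
/- Let n ≥ 2, let F ∈ ℚ[t] and let k ∈ {0,…,n−2}. Then in ℚ[t_1,…,t_n], Θ((F(t_2) − F(t_1)) · t_1^{n−2} t_2^{k} · ∏_{j=3}^n t_j^{n−j}) equals −q_k if k ≤ n−3, and equals −2·q_{n−2} if k = n−2. -/
open MvPolynomial

lemma theta_sub (n : ℕ) (a b : MvPolynomial (Fin n) ℚ) :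
    (∑ σ : Equiv.Perm (Fin n), (Equiv.Perm.sign σ : ℤ) • rename σ (a - b))
    = (∑ σ : Equiv.Perm (Fin n), (Equiv.Perm.sign σ : ℤ) • rename σ a)
      - (∑ σ : Equiv.Perm (Fin n), (Equiv.Perm.sign σ : ℤ) • rename σ b) := by
  rw [← Finset.sum_sub_distrib]
  exact Finset.sum_congr rfl fun σ _ => by rw [map_sub, smul_sub]

def expE (n k : ℕ) (c : Fin n) : ℕ :=
  if (c : ℕ) = 0 then n - 2 else if (c : ℕ) = 1 then k else n - 1 - (c : ℕ)

lemma rename_term (n : ℕ) (σ : Equiv.Perm (Fin n)) (F : Polynomial ℚ) (a : Fin n)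
    (e : Fin n → ℕ) :
    rename σ ((Polynomial.aeval (X a : MvPolynomial (Fin n) ℚ) F) * ∏ c, X c ^ e c)
      = Polynomial.aeval (X (σ a)) F * ∏ c, X (σ c) ^ e c := by
  rw [map_mul, map_prod]
  congr 1
  · rw [← rename_X σ a, ← Polynomial.aeval_algHom_apply]
  · exact Finset.prod_congr rfl fun c _ => by rw [map_pow, rename_X]

lemma prod_reindex (n : ℕ) (σ : Equiv.Perm (Fin n)) (e : Fin n → ℕ) :
    (∏ c, (X (σ c) : MvPolynomial (Fin n) ℚ) ^ e c) = ∏ d, X d ^ e (σ⁻¹ d) := by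
  rw [← Equiv.prod_comp σ (fun d => (X d : MvPolynomial (Fin n) ℚ) ^ e (σ⁻¹ d))]
  exact Finset.prod_congr rfl fun c _ => by simp

lemma prod_det (n : ℕ) (F : Polynomial ℚ) (i : ℕ) (τ : Equiv.Perm (Fin n)) (w : Fin n)
    (hw : ((τ w : Fin n) : ℕ) = 0) (f : Fin n → ℕ)
    (hf : ∀ d, d ≠ w → f d = n - 1 - ((τ d : Fin n) : ℕ)) (hfw : f w = i) :
    ((Polynomial.aeval (X w : MvPolynomial (Fin n) ℚ) F) * ∏ d, X d ^ f d)
      = ∏ d, (Matrix.of fun r c : Fin n =>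
          if (r : ℕ) = 0 then Polynomial.aeval (X c) F * X c ^ i
          else X c ^ (n - 1 - (r : ℕ))) (τ d) d := by
  have h1 : (Polynomial.aeval (X w) F : MvPolynomial (Fin n) ℚ)
      = ∏ d, if d = w then Polynomial.aeval (X d) F else 1 := by
    rw [Finset.prod_ite_eq']
    simp
  rw [h1, ← Finset.prod_mul_distrib]
  refine Finset.prod_congr rfl fun d _ => ?_
  by_cases hd : d = w
  · subst hd
    simp [Matrix.of_apply, hw, hfw]
  · have hτ : ((τ d : Fin n) : ℕ) ≠ 0 := by
      intro h
      exact hd (τ.injective (Fin.ext (by rw [h, hw])))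
    simp [Matrix.of_apply, hτ, hf d hd, hd]

lemma thetaA (n : ℕ) (hn : 2 ≤ n) (F : Polynomial ℚ) (k : ℕ) :
    (∑ σ : Equiv.Perm (Fin n), (Equiv.Perm.sign σ : ℤ) •
      rename σ ((Polynomial.aeval (X (⟨1, Nat.lt_of_lt_of_le (by norm_num) hn⟩ : Fin n)) F)
        * ∏ c, X c ^ expE n k c))
    = - qdet n F k := by
  set i0 : Fin n := ⟨0, by omega⟩ with hi0
  set i1 : Fin n := ⟨1, by omega⟩ with hi1
  have h01 : i0 ≠ i1 := by simp [hi0, hi1, Fin.ext_iff]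
  rw [qdet, Matrix.det_apply, ← Finset.sum_neg_distrib]
  refine Fintype.sum_equiv
    ((Equiv.inv (Equiv.Perm (Fin n))).trans (Equiv.mulLeft (Equiv.swap i0 i1))) _ _ ?_
  intro σ
  have heqv : ((Equiv.inv (Equiv.Perm (Fin n))).trans
      (Equiv.mulLeft (Equiv.swap i0 i1))) σ = Equiv.swap i0 i1 * σ⁻¹ := rfl
  rw [heqv]
  have hsgn : Equiv.Perm.sign (Equiv.swap i0 i1 * σ⁻¹) = - Equiv.Perm.sign σ := by
    rw [map_mul, Equiv.Perm.sign_swap h01, map_inv]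
    simp
  have hP : rename σ ((Polynomial.aeval (X i1 : MvPolynomial (Fin n) ℚ) F)
      * ∏ c, X c ^ expE n k c)
      = ∏ d, (Matrix.of fun r c : Fin n =>
          if (r : ℕ) = 0 then Polynomial.aeval (X c) F * X c ^ k
          else X c ^ (n - 1 - (r : ℕ))) ((Equiv.swap i0 i1 * σ⁻¹) d) d := by
    rw [rename_term, prod_reindex]
    refine prod_det n F k (Equiv.swap i0 i1 * σ⁻¹) (σ i1) ?_ (fun d => expE n k (σ⁻¹ d)) ?_ ?_
    · simp [Equiv.Perm.mul_apply, Equiv.swap_apply_right, hi0]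
    · intro d hd
      have hj : σ⁻¹ d ≠ i1 := by
        intro h
        exact hd (by rw [← h]; simp)
      rw [Equiv.Perm.mul_apply]
      by_cases hj0 : σ⁻¹ d = i0
      · have hv : ((σ⁻¹ d : Fin n) : ℕ) = 0 := by rw [hj0]
        rw [hj0, Equiv.swap_apply_left]
        simp [expE, hv, hi0, hi1]
        omega
      · rw [Equiv.swap_apply_of_ne_of_ne hj0 hj]
        have h0 : ((σ⁻¹ d : Fin n) : ℕ) ≠ 0 := fun h => hj0 (Fin.ext (by rw [h, hi0]))
        have h1 : ((σ⁻¹ d : Fin n) : ℕ) ≠ 1 := fun h => hj (Fin.ext (by rw [h, hi1]))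
        simp only [expE, h0, h1, ↓reduceIte]
    · simp [expE, hi1]
  rw [hP, hsgn]
  rw [Units.smul_def]
  push_cast
  rw [neg_smul, neg_neg]

lemma thetaB2 (n : ℕ) (hn : 2 ≤ n) (F : Polynomial ℚ) :
    (∑ σ : Equiv.Perm (Fin n), (Equiv.Perm.sign σ : ℤ) •
      rename σ ((Polynomial.aeval (X (⟨0, Nat.lt_of_lt_of_le (by norm_num) hn⟩ : Fin n)) F)
        * ∏ c, X c ^ expE n (n - 2) c))
    = qdet n F (n - 2) := by
  set i0 : Fin n := ⟨0, by omega⟩ with hi0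
  rw [qdet, Matrix.det_apply]
  refine Fintype.sum_equiv (Equiv.inv (Equiv.Perm (Fin n))) _ _ ?_
  intro σ
  have heqv : (Equiv.inv (Equiv.Perm (Fin n))) σ = σ⁻¹ := rfl
  rw [heqv]
  have hsgn : Equiv.Perm.sign σ⁻¹ = Equiv.Perm.sign σ := by simp
  have hP : rename σ ((Polynomial.aeval (X i0 : MvPolynomial (Fin n) ℚ) F)
      * ∏ c, X c ^ expE n (n - 2) c)
      = ∏ d, (Matrix.of fun r c : Fin n =>
          if (r : ℕ) = 0 then Polynomial.aeval (X c) F * X c ^ (n - 2)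
          else X c ^ (n - 1 - (r : ℕ))) (σ⁻¹ d) d := by
    rw [rename_term, prod_reindex]
    refine prod_det n F (n - 2) σ⁻¹ (σ i0) ?_ (fun d => expE n (n - 2) (σ⁻¹ d)) ?_ ?_
    · simp [hi0]
    · intro d hd
      have hj : σ⁻¹ d ≠ i0 := by
        intro h
        exact hd (by rw [← h]; simp)
      have h0 : ((σ⁻¹ d : Fin n) : ℕ) ≠ 0 := fun h => hj (Fin.ext (by rw [h, hi0]))
      by_cases h1 : ((σ⁻¹ d : Fin n) : ℕ) = 1
      · simp only [expE, h0, h1, ↓reduceIte, ite_self]; omega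
      · simp only [expE, h0, h1, ↓reduceIte]
    · simp [expE, hi0]
  rw [hP, hsgn]
  simp [Units.smul_def]

lemma thetaB1 (n : ℕ) (hn : 2 ≤ n) (F : Polynomial ℚ) (k : ℕ) (hk3 : k + 3 ≤ n) :
    (∑ σ : Equiv.Perm (Fin n), (Equiv.Perm.sign σ : ℤ) •
      rename σ ((Polynomial.aeval (X (⟨0, Nat.lt_of_lt_of_le (by norm_num) hn⟩ : Fin n)) F)
        * ∏ c, X c ^ expE n k c))
    = (0 : MvPolynomial (Fin n) ℚ) := by
  set i0 : Fin n := ⟨0, by omega⟩ with hi0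
  set i1 : Fin n := ⟨1, by omega⟩ with hi1
  set j : Fin n := ⟨n - 1 - k, by omega⟩ with hj
  have hj1 : i1 ≠ j := by simp [hi1, hj, Fin.ext_iff]; omega
  set s : Equiv.Perm (Fin n) := Equiv.swap i1 j with hs
  have hne0 : n - 1 - k ≠ 0 := by omega
  have hne1 : n - 1 - k ≠ 1 := by omega
  have hEj : expE n k j = k := by
    simp [expE, hj, hne0, hne1]
    omega
  have hEi1 : expE n k i1 = k := by simp [expE, hi1]
  have hEs : ∀ c, expE n k (s c) = expE n k c := by
    intro c
    by_cases hc1 : c = i1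
    · subst hc1
      rw [hs, Equiv.swap_apply_left, hEj, hEi1]
    · by_cases hcj : c = j
      · subst hcj
        rw [hs, Equiv.swap_apply_right, hEj, hEi1]
      · rw [hs, Equiv.swap_apply_of_ne_of_ne hc1 hcj]
  have hinv : ∀ σ : Equiv.Perm (Fin n),
      rename (σ * s) ((Polynomial.aeval (X i0 : MvPolynomial (Fin n) ℚ) F)
        * ∏ c, X c ^ expE n k c)
      = rename σ ((Polynomial.aeval (X i0 : MvPolynomial (Fin n) ℚ) F)
        * ∏ c, X c ^ expE n k c) := by
    intro σ
    rw [rename_term, rename_term]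
    have h0 : (σ * s) i0 = σ i0 := by
      rw [Equiv.Perm.mul_apply, hs, Equiv.swap_apply_of_ne_of_ne]
      · simp [hi0, hi1, Fin.ext_iff]
      · simp [hi0, hj, Fin.ext_iff]; omega
    rw [h0]
    congr 1
    calc ∏ c, (X ((σ * s) c) : MvPolynomial (Fin n) ℚ) ^ expE n k c
        = ∏ c, (X (σ (s c)) : MvPolynomial (Fin n) ℚ) ^ expE n k (s c) := by
          refine Finset.prod_congr rfl fun c _ => by rw [hEs, Equiv.Perm.mul_apply]
      _ = ∏ c, (X (σ c) : MvPolynomial (Fin n) ℚ) ^ expE n k c :=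
          Equiv.prod_comp s (fun c => (X (σ c) : MvPolynomial (Fin n) ℚ) ^ expE n k c)
  refine Finset.sum_involution (fun σ _ => σ * s) ?_ ?_ (fun _ _ => Finset.mem_univ _) ?_
  · intro σ _
    rw [hinv]
    have : Equiv.Perm.sign (σ * s) = - Equiv.Perm.sign σ := by
      rw [map_mul, hs, Equiv.Perm.sign_swap hj1]
      simp
    rw [this]
    push_cast
    rw [neg_smul, add_neg_cancel]
  · intro σ _ _
    intro h
    have : s = 1 := mul_left_cancel (a := σ) (by rw [mul_one]; exact h)
    have := congrArg (fun p => p i1) this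
    simp [hs, Equiv.swap_apply_left] at this
    exact hj1 this.symm
  · intro σ _
    show σ * s * s = σ
    rw [mul_assoc]
    simp [hs]


/-- Let `n ≥ 2`, `F ∈ ℚ[t]` and `k ∈ {0,…,n−2}`.  Then
`Θ((F(t₂) − F(t₁)) · t₁^{n−2} t₂^k · ∏_{j=3}^n t_j^{n−j})` equals `−q_k` if `k ≤ n−3`
and `−2·q_{n−2}` if `k = n−2`. -/
theorem stmt13 (n : ℕ) (hn : 2 ≤ n) (F : Polynomial ℚ) (k : ℕ) (hk : k ≤ n - 2) :
    (k + 3 ≤ n →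
      theta n ((Polynomial.aeval (X (⟨1, by omega⟩ : Fin n)) F
          - Polynomial.aeval (X (⟨0, by omega⟩ : Fin n)) F)
        * ∏ c : Fin n, X c ^
            (if (c : ℕ) = 0 then n - 2 else if (c : ℕ) = 1 then k else n - 1 - (c : ℕ)))
        = -qdet n F k)
    ∧ (k + 2 = n →
      theta n ((Polynomial.aeval (X (⟨1, by omega⟩ : Fin n)) F
          - Polynomial.aeval (X (⟨0, by omega⟩ : Fin n)) F)
        * ∏ c : Fin n, X c ^
            (if (c : ℕ) = 0 then n - 2 else if (c : ℕ) = 1 then k else n - 1 - (c : ℕ)))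
        = -(2 : MvPolynomial (Fin n) ℚ) * qdet n F (n - 2)) := by
  have hA := thetaA n hn F k
  constructor
  · intro h3
    have hB := thetaB1 n hn F k h3
    simp only [expE] at hA hB
    unfold theta
    rw [sub_mul, theta_sub, hA, hB, sub_zero]
  · intro h2
    have hk' : k = n - 2 := by omega
    subst hk'
    have hB := thetaB2 n hn F
    simp only [expE] at hA hB
    unfold theta
    rw [sub_mul, theta_sub, hA, hB]
    ring
end

section
/- Let n ≥ 3, let F ∈ ℚ[t], and let k_1,…,k_n be integers with 0 ≤ k_j ≤ n−j for every j ∈ {1,…,n}. If there exists some j ∈ {3,…,n} with k_j ≠ n−j, then Θ((F(t_2) − F(t_1)) · t_1^{k_1} t_2^{k_2} ⋯ t_n^{k_n}) = 0 in ℚ[t_1,…,t_n]. -/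
open MvPolynomial

lemma theta_eq_zero_of_swap (n : ℕ) (p : MvPolynomial (Fin n) ℚ) (i j : Fin n) (hij : i ≠ j)
    (hp : rename (Equiv.swap i j) p = p) : theta n p = 0 := by
  have key : theta n p = - theta n p := by
    unfold theta
    rw [← neg_eq_iff_eq_neg, ← Finset.sum_neg_distrib]
    refine Fintype.sum_equiv (Equiv.mulRight (Equiv.swap i j)) _ _ (fun σ => ?_)
    simp only [Equiv.coe_mulRight, Equiv.Perm.sign_mul, Equiv.Perm.sign_swap hij,
      Equiv.Perm.coe_mul]
    rw [← rename_rename, hp]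
    push_cast
    rw [mul_neg_one, neg_smul]
  have h2 : (2 : ℚ) • theta n p = 0 := by
    rw [two_smul]
    nth_rewrite 2 [key]
    simp
  simpa using h2

/-- Let `n ≥ 3`, `F ∈ ℚ[t]` and `k₁,…,k_n` with `0 ≤ k_j ≤ n−j`.  If some `j ∈ {3,…,n}`
has `k_j ≠ n−j`, then `Θ((F(t₂) − F(t₁)) · t₁^{k₁} ⋯ t_n^{k_n}) = 0`.
(0-based: index `j` corresponds to the variable `t_{j+1}`, with exponent bound `n−1−j`.) -/
theorem stmt14 (n : ℕ) (hn : 3 ≤ n) (F : Polynomial ℚ) (k : Fin n → ℕ)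
    (hk : ∀ j : Fin n, k j ≤ n - 1 - (j : ℕ))
    (hex : ∃ j : Fin n, 2 ≤ (j : ℕ) ∧ k j ≠ n - 1 - (j : ℕ)) :
    theta n ((Polynomial.aeval (X (⟨1, by omega⟩ : Fin n)) F
        - Polynomial.aeval (X (⟨0, by omega⟩ : Fin n)) F)
      * ∏ c : Fin n, X c ^ k c) = 0 := by
  obtain ⟨j₀, hj₀2, hj₀ne⟩ := hex
  -- pigeonhole on indices ≥ j₀
  have hmaps : ∀ c ∈ Finset.Ici j₀, k c ∈ Finset.range (n - 1 - (j₀ : ℕ)) := by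
    intro c hc
    rw [Finset.mem_Ici] at hc
    rw [Finset.mem_range]
    have hkc := hk c
    have hcn : (c : ℕ) < n := c.isLt
    have hjn : (j₀ : ℕ) < n := j₀.isLt
    have hcj : (j₀ : ℕ) ≤ (c : ℕ) := hc
    rcases eq_or_lt_of_le hcj with h | h
    · have : c = j₀ := by
        apply Fin.ext; omega
      subst this
      have hkj := hk c
      omega
    · omega
  have hcard : (Finset.range (n - 1 - (j₀ : ℕ))).card < (Finset.Ici j₀).card := by
    rw [Finset.card_range, Fin.card_Ici]
    have hjn : (j₀ : ℕ) < n := j₀.isLt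
    omega
  obtain ⟨a, ha, b, hb, hab, hkab⟩ :=
    Finset.exists_ne_map_eq_of_card_lt_of_maps_to hcard hmaps
  rw [Finset.mem_Ici] at ha hb
  have ha2 : 2 ≤ (a : ℕ) := le_trans hj₀2 ha
  have hb2 : 2 ≤ (b : ℕ) := le_trans hj₀2 hb
  apply theta_eq_zero_of_swap n _ a b hab
  set τ := Equiv.swap a b with hτ
  have hτk : ∀ c, k (τ c) = k c := by
    intro c
    rcases eq_or_ne c a with rfl | hca
    · rw [hτ, Equiv.swap_apply_left, hkab]
    rcases eq_or_ne c b with rfl | hcb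
    · rw [hτ, Equiv.swap_apply_right, hkab]
    · rw [hτ, Equiv.swap_apply_of_ne_of_ne hca hcb]
  have hτ0 : τ (⟨0, by omega⟩ : Fin n) = ⟨0, by omega⟩ := by
    apply Equiv.swap_apply_of_ne_of_ne
    · intro h; apply absurd ha2; rw [← h]; simp
    · intro h; apply absurd hb2; rw [← h]; simp
  have hτ1 : τ (⟨1, by omega⟩ : Fin n) = ⟨1, by omega⟩ := by
    apply Equiv.swap_apply_of_ne_of_ne
    · intro h; apply absurd ha2; rw [← h]; simp
    · intro h; apply absurd hb2; rw [← h]; simp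
  rw [map_mul, map_sub]
  congr 1
  · rw [← Polynomial.aeval_algHom_apply, ← Polynomial.aeval_algHom_apply, rename_X, rename_X,
      hτ0, hτ1]
  · rw [map_prod]
    simp only [map_pow, rename_X]
    refine Fintype.prod_equiv τ _ _ (fun c => ?_)
    rw [hτk c]
end
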